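/- arXiv:0902.4726 — 3 statements merged into one kernel-verified Lean document; each statement's English description precedes it below -/
import Mathlib

section
/- Let Y be a complete holomorphic vector field on ℂ² with flow φ, and let f : ℂ² → ℂ be holomorphic such that f·Y is also complete. If z ∈ ℂ² is a point with Y(z) ≠ 0, then t ↦ f(φ(t,z)) is an affine function of t, i.e. there exist a, b ∈ ℂ with f(φ(t,z)) = a t + b for all t ∈ ℂ. Consequently Y(Y f) = 0 on ℂ². -/
open Complex

open Metric Set Filter Topology


section Unique

variable {E : Type*} [NormedAddCommGroup E] [NormedSpace ℂ E]

lemma lipschitzOnWith_csmul {V : E → E} {K : NNReal} {s : Set E} (hV : LipschitzOnWith K V s)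
    (c : ℂ) : LipschitzOnWith (‖c‖₊ * K) (fun x => c • V x) s := by
  intro x hx y hy
  calc edist (c • V x) (c • V y) = ‖c‖₊ * edist (V x) (V y) := by
        rw [edist_smul₀]; rfl
    _ ≤ ‖c‖₊ * (K * edist x y) := by
        gcongr
        exact hV hx hy
    _ = (‖c‖₊ * K : NNReal) * edist x y := by
        push_cast
        ring

lemma lipschitzOnWith_weaken {E : Type*} [PseudoEMetricSpace E] {F : Type*} [PseudoEMetricSpace F]
    {f : E → F} {K K' : NNReal} {s : Set E} (hf : LipschitzOnWith K f s) (h : K ≤ K') :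
    LipschitzOnWith K' f s := fun x hx y hy =>
  le_trans (hf hx hy) (mul_le_mul_left (ENNReal.coe_le_coe.mpr h) _)

lemma ode_real_unique [NormedSpace ℝ E] [IsScalarTower ℝ ℂ E]
    {V : E → E} (hV : ∀ x, ∃ K : NNReal, ∃ s ∈ 𝓝 x, LipschitzOnWith K V s)
    {β : ℝ → ℂ} (hβ : Continuous β) {y₁ y₂ : ℝ → E} {a b t₀ : ℝ}
    (ht₀ : t₀ ∈ Ioo a b)
    (h₁ : ∀ s ∈ Ioo a b, HasDerivAt y₁ (β s • V (y₁ s)) s)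
    (h₂ : ∀ s ∈ Ioo a b, HasDerivAt y₂ (β s • V (y₂ s)) s)
    (h0 : y₁ t₀ = y₂ t₀) : EqOn y₁ y₂ (Ioo a b) := by
  haveI : PreconnectedSpace (Ioo a b) := Subtype.preconnectedSpace isPreconnected_Ioo
  set A : Set (Ioo a b) := {s | y₁ s.val = y₂ s.val} with hA
  have hcont₁ : ContinuousOn y₁ (Ioo a b) := fun s hs => ((h₁ s hs).continuousAt).continuousWithinAt
  have hcont₂ : ContinuousOn y₂ (Ioo a b) := fun s hs => ((h₂ s hs).continuousAt).continuousWithinAt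
  have hclosed : IsClosed A := by
    apply isClosed_eq
    · exact (continuousOn_iff_continuous_restrict.mp hcont₁)
    · exact (continuousOn_iff_continuous_restrict.mp hcont₂)
  have hopen : IsOpen A := by
    rw [isOpen_iff_mem_nhds]
    rintro ⟨s₀, hs₀⟩ hmem
    have heq : y₁ s₀ = y₂ s₀ := hmem
    obtain ⟨K, sl, hsl, hK⟩ := hV (y₁ s₀)
    obtain ⟨ρ, hρ, hball⟩ := Metric.mem_nhds_iff.mp hsl
    obtain ⟨M, hM⟩ := (isCompact_Icc (a := s₀ - 1) (b := s₀ + 1)).exists_bound_of_continuousOn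
      hβ.continuousOn
    classical
    set v : ℝ → E → E := fun t x => β t • V x with hv_def
    set sset : ℝ → Set E := fun t =>
      if t ∈ Icc (s₀ - 1) (s₀ + 1) then ball (y₁ s₀) ρ else (∅ : Set E) with hsset
    have hv : ∀ t, LipschitzOnWith (M.toNNReal * K) (v t) (sset t) := by
      intro t
      by_cases ht : t ∈ Icc (s₀ - 1) (s₀ + 1)
      · rw [hsset]; simp only [if_pos ht]
        apply lipschitzOnWith_weaken (lipschitzOnWith_csmul (hK.mono hball) (β t))
        · have hM0 : 0 ≤ M := le_trans (norm_nonneg _) (hM s₀ ⟨by linarith, by linarith⟩)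
          have h1 : ‖β t‖₊ ≤ M.toNNReal := by
            rw [← NNReal.coe_le_coe, coe_nnnorm, Real.coe_toNNReal _ hM0]
            exact hM t ht
          exact mul_le_mul_left h1 K
      · rw [hsset]; simp only [if_neg ht]
        exact fun x hx => absurd hx (Set.notMem_empty x)
    have hev : ∀ᶠ t in 𝓝 s₀, t ∈ Ioo a b ∧ t ∈ Icc (s₀-1) (s₀+1) ∧
        y₁ t ∈ ball (y₁ s₀) ρ ∧ y₂ t ∈ ball (y₁ s₀) ρ := by
      have e1 : ∀ᶠ t in 𝓝 s₀, t ∈ Ioo a b := (isOpen_Ioo.eventually_mem hs₀)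
      have e2 : ∀ᶠ t in 𝓝 s₀, t ∈ Icc (s₀-1) (s₀+1) :=
        Icc_mem_nhds (by linarith) (by linarith)
      have e3 : ∀ᶠ t in 𝓝 s₀, y₁ t ∈ ball (y₁ s₀) ρ :=
        ((h₁ s₀ hs₀).continuousAt).preimage_mem_nhds (ball_mem_nhds _ hρ)
      have e4 : ∀ᶠ t in 𝓝 s₀, y₂ t ∈ ball (y₁ s₀) ρ := by
        have : ContinuousAt y₂ s₀ := (h₂ s₀ hs₀).continuousAt
        apply this.preimage_mem_nhds
        rw [heq]
        exact ball_mem_nhds _ hρ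
      filter_upwards [e1, e2, e3, e4] with t u1 u2 u3 u4
      exact ⟨u1, u2, u3, u4⟩
    have key : y₁ =ᶠ[𝓝 s₀] y₂ := by
      apply ODE_solution_unique_of_eventually (Filter.Eventually.of_forall hv) ?_ ?_ heq
      · filter_upwards [hev] with t ⟨u1, u2, u3, _⟩
        refine ⟨h₁ t u1, ?_⟩
        rw [hsset]; simp only [if_pos u2]; exact u3
      · filter_upwards [hev] with t ⟨u1, u2, _, u4⟩
        refine ⟨h₂ t u1, ?_⟩
        rw [hsset]; simp only [if_pos u2]; exact u4
    have hAmem : A = (Subtype.val : Ioo a b → ℝ) ⁻¹' {t | y₁ t = y₂ t} := rfl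
    rw [hAmem]
    exact (continuousAt_subtype_val).preimage_mem_nhds key
  have hne : A.Nonempty := ⟨⟨t₀, ht₀⟩, h0⟩
  have := (IsClopen.eq_univ ⟨hclosed, hopen⟩ hne : A = univ)
  intro s hs
  have : (⟨s, hs⟩ : Ioo a b) ∈ A := by rw [this]; trivial
  exact this

end Unique

section Unique2

variable {E : Type*} [NormedAddCommGroup E] [NormedSpace ℂ E]

lemma ode_complex_unique [NormedSpace ℝ E] [IsScalarTower ℝ ℂ E]
    {V : E → E} (hV : ∀ x, ∃ K : NNReal, ∃ s ∈ 𝓝 x, LipschitzOnWith K V s)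
    {α : ℂ → ℂ} (hα : Continuous α) {x₁ x₂ : ℂ → E}
    (h₁ : ∀ t, HasDerivAt x₁ (α t • V (x₁ t)) t)
    (h₂ : ∀ t, HasDerivAt x₂ (α t • V (x₂ t)) t)
    (h0 : x₁ 0 = x₂ 0) : x₁ = x₂ := by
  funext t
  rcases eq_or_ne t 0 with rfl | ht
  · exact h0
  set c : ℝ → ℂ := fun s : ℝ => (s : ℂ) * t with hc_def
  have hc : ∀ s : ℝ, HasDerivAt c t s := by
    intro s
    have h := (Complex.ofRealCLM.hasDerivAt (x := s)).mul_const t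
    simpa using h
  have key : ∀ (x : ℂ → E), (∀ u, HasDerivAt x (α u • V (x u)) u) →
      ∀ s : ℝ, HasDerivAt (x ∘ c) ((t * α (c s)) • V (x (c s))) s := by
    intro x hx s
    have := (hx (c s)).scomp s (hc s)
    rwa [smul_smul] at this
  have hβ : Continuous fun s : ℝ => t * α (c s) := by
    apply continuous_const.mul
    exact hα.comp (by continuity)
  have := ode_real_unique hV hβ (y₁ := x₁ ∘ c) (y₂ := x₂ ∘ c) (a := -2) (b := 2) (t₀ := 0)
    (by norm_num) (fun s _ => key x₁ h₁ s) (fun s _ => key x₂ h₂ s)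
    (by simp [hc_def, h0])
  have h1 := this (Set.mem_Ioo.mpr ⟨by norm_num, by norm_num⟩ : (1:ℝ) ∈ Ioo (-2:ℝ) 2)
  simpa [hc_def] using h1

end Unique2

section Primitive

lemma primitive_unique {u U V : ℂ → ℂ} {c : ℂ} {ρ : ℝ}
    (hU : ∀ z ∈ ball c ρ, HasDerivAt U (u z) z)
    (hV : ∀ z ∈ ball c ρ, HasDerivAt V (u z) z)
    (h0 : U c = V c) : EqOn U V (ball c ρ) := by
  intro z hz
  have hρ : 0 < ρ := pos_of_mem_ball hz
  have hc : c ∈ ball c ρ := mem_ball_self hρ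
  have hdiff : DifferentiableOn ℂ (fun w => U w - V w) (ball c ρ) := by
    intro x hx
    exact (((hU x hx).sub (hV x hx)).differentiableAt).differentiableWithinAt
  have hzero : ∀ x ∈ ball c ρ, fderivWithin ℂ (fun w => U w - V w) (ball c ρ) x = 0 := by
    intro x hx
    rw [fderivWithin_of_isOpen isOpen_ball hx]
    have hd : HasDerivAt (fun w => U w - V w) 0 x := by
      exact ((hU x hx).sub (hV x hx)).congr_deriv (sub_self _)
    have := hd.hasFDerivAt.fderiv
    rw [this]
    ext w
    simp
  have := (convex_ball c ρ).is_const_of_fderivWithin_eq_zero hdiff hzero hz hc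
  have h2 : U z - V z = U c - V c := this
  rw [h0, sub_self] at h2
  exact sub_eq_zero.mp h2

lemma exists_primitive_ball {u : ℂ → ℂ} {c : ℂ} {R r : ℝ}
    (hu : DifferentiableOn ℂ u (ball c R)) (hr : 0 < r) (hrR : r < R) :
    ∃ U : ℂ → ℂ, U c = 0 ∧ ∀ z ∈ ball c r, HasDerivAt U (u z) z := by
  classical
  set A : ℕ → ℂ := fun n => ((n.factorial : ℂ))⁻¹ * iteratedDeriv n u c with hA
  have hSum : ∀ z ∈ ball c R, HasSum (fun n => A n * (z - c) ^ n) (u z) := by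
    intro z hz
    have h := hasSum_taylorSeries_on_ball hu hz
    convert h using 2 with n
    · rfl
    simp only [hA, smul_eq_mul]
    ring
  set r' : ℝ := (r + R) / 2 with hr'
  have hr'0 : 0 < r' := by simp only [hr']; linarith
  have hrr' : r < r' := by simp only [hr']; linarith
  have hr'R : r' < R := by simp only [hr']; linarith
  have hmem : c + (r' : ℂ) ∈ ball c R := by
    simp only [mem_ball, dist_eq]
    simpa [abs_of_nonneg hr'0.le] using hr'R
  have hs' : Summable (fun n => A n * (r' : ℂ) ^ n) := by
    have := (hSum (c + r') hmem).summable
    simpa using this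
  obtain ⟨C, hC⟩ : ∃ C, ∀ n, ‖A n‖ * r' ^ n ≤ C := by
    have h0 : Filter.Tendsto (fun n => A n * (r' : ℂ) ^ n) atTop (𝓝 0) :=
      hs'.tendsto_atTop_zero
    have h0' : Filter.Tendsto (fun n => ‖A n * (r' : ℂ) ^ n‖) atTop (𝓝 0) := by
      simpa using h0.norm
    obtain ⟨C, hC⟩ := h0'.bddAbove_range
    refine ⟨C, fun n => ?_⟩
    have h5 := hC (Set.mem_range_self n)
    have h6 : ‖A n * (r' : ℂ) ^ n‖ = ‖A n‖ * r' ^ n := by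
      rw [norm_mul, norm_pow, Complex.norm_real, Real.norm_of_nonneg hr'0.le]
    rwa [h6] at h5
  set q : ℝ := r / r' with hq
  have hq0 : 0 ≤ q := div_nonneg hr.le hr'0.le
  have hq1 : q < 1 := (div_lt_one hr'0).mpr hrr'
  set G : ℕ → ℂ → ℂ := fun n z => (A n / ((n : ℂ) + 1)) * (z - c) ^ (n + 1) with hG
  set G' : ℕ → ℂ → ℂ := fun n z => A n * (z - c) ^ n with hG'
  have hGderiv : ∀ n y, HasDerivAt (G n) (G' n y) y := by
    intro n y
    have h1 : HasDerivAt (fun z : ℂ => (z - c) ^ (n + 1))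
        (((n : ℂ) + 1) * (y - c) ^ n) y := by
      have := ((hasDerivAt_id y).sub_const c).pow (n + 1)
      simp at this; exact this
    have h2 := h1.const_mul (A n / ((n : ℂ) + 1))
    refine h2.congr_deriv ?_
    have hne : ((n : ℂ) + 1) ≠ 0 := Nat.cast_add_one_ne_zero n
    rw [hG']
    field_simp
    try ring
  have hbound : ∀ n, ∀ y ∈ ball c r, ‖G' n y‖ ≤ C * q ^ n := by
    intro n y hy
    have h1 : ‖G' n y‖ = ‖A n‖ * ‖y - c‖ ^ n := by simp [hG', norm_mul, norm_pow]
    rw [h1]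
    have h2 : ‖y - c‖ ≤ r := by
      have := mem_ball_iff_norm.mp hy
      exact this.le
    have h3 : ‖A n‖ * ‖y - c‖ ^ n ≤ ‖A n‖ * r ^ n := by
      gcongr
    refine h3.trans ?_
    have h4 : r ^ n = r' ^ n * q ^ n := by
      rw [← mul_pow]
      congr 1
      rw [hq]; field_simp
    calc ‖A n‖ * r ^ n = (‖A n‖ * r' ^ n) * q ^ n := by rw [h4]; ring
      _ ≤ C * q ^ n := mul_le_mul_of_nonneg_right (hC n) (pow_nonneg hq0 n)
  have hsumw : Summable (fun n => C * q ^ n) :=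
    (summable_geometric_of_lt_one hq0 hq1).mul_left C
  refine ⟨fun z => ∑' n, G n z, ?_, ?_⟩
  · have : ∀ n, G n c = 0 := by intro n; simp [hG]
    simp [this]
  · intro z hz
    have hzR : z ∈ ball c R := ball_subset_ball hrR.le hz
    have hder := hasDerivAt_tsum_of_isPreconnected hsumw isOpen_ball
      (convex_ball c r).isPreconnected
      (fun n y hy => hGderiv n y) hbound (mem_ball_self hr)
      (by
        have : ∀ n, G n c = 0 := by intro n; simp [hG]
        simp only [this]
        exact summable_zero) hz
    have : (∑' n, G' n z) = u z := (hSum z hzR).tsum_eq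
    rwa [this] at hder

lemma exists_primitive_entire {u : ℂ → ℂ} (hu : Differentiable ℂ u) :
    ∃ U : ℂ → ℂ, U 0 = 0 ∧ ∀ z, HasDerivAt U (u z) z := by
  have hexists : ∀ n : ℕ, ∃ U : ℂ → ℂ, U 0 = 0 ∧
      ∀ z ∈ ball (0 : ℂ) (n + 1), HasDerivAt U (u z) z := by
    intro n
    exact exists_primitive_ball (hu.differentiableOn (s := ball 0 (n + 2)))
      (by positivity) (by norm_num)
  choose Uf hUf0 hUfd using hexists
  have hagree : ∀ m n : ℕ, ∀ z : ℂ, ‖z‖ < m + 1 → ‖z‖ < n + 1 → Uf m z = Uf n z := by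
    intro m n z hm hn
    set ρ : ℝ := min (m + 1) (n + 1) with hρ
    have hzρ : z ∈ ball (0 : ℂ) ρ := by
      simp only [mem_ball, dist_zero_right, hρ, lt_min_iff]
      exact ⟨hm, hn⟩
    exact primitive_unique
      (fun w hw => hUfd m w (ball_subset_ball (min_le_left _ _) hw))
      (fun w hw => hUfd n w (ball_subset_ball (min_le_right _ _) hw))
      (by rw [hUf0, hUf0]) hzρ
  set N : ℂ → ℕ := fun z => ⌊‖z‖⌋₊ + 1 with hN
  have hNlt : ∀ z : ℂ, ‖z‖ < N z + 1 := by
    intro z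
    have := Nat.lt_floor_add_one ‖z‖
    simp only [hN]
    push_cast
    linarith
  refine ⟨fun z => Uf (N z) z, by simpa using hUf0 (N 0), ?_⟩
  intro z₀
  set k : ℕ := N z₀ + 1 with hk
  have hloc : ∀ w ∈ ball z₀ 1, Uf (N w) w = Uf k w := by
    intro w hw
    apply hagree
    · exact hNlt w
    · have h1 : ‖w‖ < ‖z₀‖ + 1 := by
        have := mem_ball_iff_norm.mp hw
        calc ‖w‖ = ‖z₀ + (w - z₀)‖ := by ring_nf
          _ ≤ ‖z₀‖ + ‖w - z₀‖ := norm_add_le _ _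
          _ < ‖z₀‖ + 1 := by
              have : ‖w - z₀‖ < 1 := by simpa [norm_sub_rev] using this
              linarith
      have h2 : ‖z₀‖ < N z₀ + 1 := hNlt z₀
      have h4 : (k : ℝ) = (N z₀ : ℝ) + 1 := by exact_mod_cast hk
      rw [h4]
      linarith
  have hder : HasDerivAt (Uf k) (u z₀) z₀ := by
    apply hUfd k z₀
    simp only [mem_ball, dist_zero_right]
    have h2 := hNlt z₀
    have h4 : (k : ℝ) = (N z₀ : ℝ) + 1 := by exact_mod_cast hk
    rw [h4]
    linarith
  apply hder.congr_of_eventuallyEq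
  filter_upwards [ball_mem_nhds z₀ one_pos] with w hw
  exact hloc w hw

end Primitive

section Lip

lemma lipschitz_1d {F : Type*} [NormedAddCommGroup F] [NormedSpace ℂ F] {u : ℂ → F}
    (hu : Differentiable ℂ u) {a : ℂ} {M : ℝ}
    (hM : ∀ ζ ∈ closedBall a 3, ‖u ζ‖ ≤ M) :
    ∀ z ∈ ball a 1, ∀ w ∈ ball a 1, ‖u z - u w‖ ≤ M * ‖z - w‖ := by
  have hder : ∀ x ∈ ball a 2, ‖deriv u x‖ ≤ M := by
    intro x hx
    have h2 : ∀ ζ ∈ sphere x 1, ‖u ζ‖ ≤ M := by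
      intro ζ hζ
      apply hM
      have h3 : dist ζ a ≤ dist ζ x + dist x a := dist_triangle _ _ _
      rw [mem_sphere] at hζ
      rw [mem_ball] at hx
      rw [mem_closedBall]
      rw [hζ] at h3
      linarith
    have := norm_deriv_le_of_forall_mem_sphere_norm_le one_pos hu.diffContOnCl h2
    simpa using this
  intro z hz w hw
  exact Convex.norm_image_sub_le_of_norm_hasDerivWithin_le (𝕜 := ℂ)
    (f := u) (f' := fun x => deriv u x) (s := ball a 2)
    (fun x _ => (hu x).hasDerivAt.hasDerivWithinAt) hder (convex_ball a 2)
    (ball_subset_ball (by norm_num) hw) (ball_subset_ball (by norm_num) hz)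

lemma differentiable_locally_lipschitz {F : Type*} [NormedAddCommGroup F] [NormedSpace ℂ F]
    {Y : ℂ × ℂ → F} (hY : Differentiable ℂ Y) (x : ℂ × ℂ) :
    ∃ K : NNReal, ∃ s ∈ 𝓝 x, LipschitzOnWith K Y s := by
  obtain ⟨a, b⟩ := x
  obtain ⟨M, hM⟩ := (isCompact_closedBall ((a, b) : ℂ × ℂ) 4).exists_bound_of_continuousOn
    hY.continuous.continuousOn
  have hM0 : 0 ≤ M :=
    le_trans (norm_nonneg _) (hM (a, b) (mem_closedBall_self (by norm_num)))
  refine ⟨(2 * M).toNNReal, ball ((a, b) : ℂ × ℂ) 1, ball_mem_nhds _ one_pos, ?_⟩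
  rw [lipschitzOnWith_iff_dist_le_mul]
  intro p hp q hq
  have hpd := mem_ball.mp hp
  have hqd := mem_ball.mp hq
  rw [Prod.dist_eq] at hpd hqd
  have hp1 : dist p.1 a < 1 := lt_of_le_of_lt le_sup_left hpd
  have hp2 : dist p.2 b < 1 := lt_of_le_of_lt le_sup_right hpd
  have hq1 : dist q.1 a < 1 := lt_of_le_of_lt le_sup_left hqd
  have hq2 : dist q.2 b < 1 := lt_of_le_of_lt le_sup_right hqd
  have step1 : ‖Y (p.1, p.2) - Y (q.1, p.2)‖ ≤ M * ‖p.1 - q.1‖ := by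
    have hdiff : Differentiable ℂ (fun ζ : ℂ => Y (ζ, p.2)) :=
      hY.comp (differentiable_id.prodMk (differentiable_const _))
    have hbd : ∀ ζ ∈ closedBall a 3, ‖Y (ζ, p.2)‖ ≤ M := by
      intro ζ hζ
      apply hM
      rw [mem_closedBall, Prod.dist_eq]
      rw [mem_closedBall] at hζ
      exact max_le (by linarith) (by linarith [hp2.le])
    exact lipschitz_1d hdiff hbd p.1 (mem_ball.mpr hp1) q.1 (mem_ball.mpr hq1)
  have step2 : ‖Y (q.1, p.2) - Y (q.1, q.2)‖ ≤ M * ‖p.2 - q.2‖ := by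
    have hdiff : Differentiable ℂ (fun ζ : ℂ => Y (q.1, ζ)) :=
      hY.comp ((differentiable_const _).prodMk differentiable_id)
    have hbd : ∀ ζ ∈ closedBall b 3, ‖Y (q.1, ζ)‖ ≤ M := by
      intro ζ hζ
      apply hM
      rw [mem_closedBall, Prod.dist_eq]
      rw [mem_closedBall] at hζ
      exact max_le (by linarith [hq1.le]) (by linarith)
    exact lipschitz_1d hdiff hbd p.2 (mem_ball.mpr hp2) q.2 (mem_ball.mpr hq2)
  have htot : dist (Y p) (Y q) ≤ M * ‖p.1 - q.1‖ + M * ‖p.2 - q.2‖ := by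
    rw [dist_eq_norm]
    calc ‖Y p - Y q‖ = ‖(Y (p.1, p.2) - Y (q.1, p.2)) + (Y (q.1, p.2) - Y (q.1, q.2))‖ := by
          rw [Prod.mk.eta, Prod.mk.eta]
          congr 1
          abel
    _ ≤ ‖Y (p.1, p.2) - Y (q.1, p.2)‖ + ‖Y (q.1, p.2) - Y (q.1, q.2)‖ := norm_add_le _ _
    _ ≤ M * ‖p.1 - q.1‖ + M * ‖p.2 - q.2‖ := add_le_add step1 step2
  have h1 : ‖p.1 - q.1‖ ≤ dist p q := by
    rw [← dist_eq_norm, Prod.dist_eq]; exact le_max_left _ _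
  have h2 : ‖p.2 - q.2‖ ≤ dist p q := by
    rw [← dist_eq_norm, Prod.dist_eq]; exact le_max_right _ _
  have hfin : dist (Y p) (Y q) ≤ 2 * M * dist p q := by
    have := htot.trans (add_le_add (mul_le_mul_of_nonneg_left h1 hM0)
      (mul_le_mul_of_nonneg_left h2 hM0))
    linarith
  rw [Real.coe_toNNReal _ (by linarith)]
  exact hfin

end Lip

section LocalInj

lemma inj_of_hasStrictDerivAt {G : ℂ → ℂ} {a p : ℂ} (h : HasStrictDerivAt G a p) (ha : a ≠ 0) :
    ∃ δ > 0, InjOn G (ball p δ) := by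
  have h2 := h.isLittleO
  rw [Asymptotics.isLittleO_iff] at h2
  have h3 := h2 (c := ‖a‖ / 2) (half_pos (norm_pos_iff.mpr ha))
  obtain ⟨ε, hε, hev⟩ := Metric.eventually_nhds_iff.mp h3
  refine ⟨ε, hε, ?_⟩
  intro x hx y hy hxy
  have hmem : dist ((x, y) : ℂ × ℂ) (p, p) < ε := by
    rw [Prod.dist_eq]
    exact max_lt (mem_ball.mp hx) (mem_ball.mp hy)
  have h4 := hev hmem
  simp only [hxy, sub_self, zero_sub, norm_neg, ContinuousLinearMap.smulRight_apply,
    ContinuousLinearMap.one_apply, ContinuousLinearMap.toSpanSingleton_apply, smul_eq_mul, norm_mul] at h4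
  by_contra hne
  have h6 : 0 < ‖x - y‖ := by
    rw [norm_pos_iff, sub_ne_zero]
    exact hne
  have h7 : 0 < ‖a‖ := norm_pos_iff.mpr ha
  nlinarith

end LocalInj

section Growth

lemma polynomial_of_growth : ∀ (m : ℕ) (u : ℂ → ℂ), Differentiable ℂ u →
    ∀ (C R₀ : ℝ), (∀ w : ℂ, R₀ ≤ ‖w‖ → ‖u w‖ ≤ C * ‖w‖ ^ m) →
    ∃ p : Polynomial ℂ, ∀ z, u z = p.eval z := by
  intro m
  induction m with
  | zero =>
    intro u hu C R₀ hbd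
    obtain ⟨M, hM⟩ := (isCompact_closedBall (0 : ℂ) (max R₀ 0)).exists_bound_of_continuousOn
      hu.continuous.continuousOn
    have hbdd : Bornology.IsBounded (Set.range u) := by
      rw [isBounded_iff_forall_norm_le]
      refine ⟨max M C, ?_⟩
      rintro x ⟨w, rfl⟩
      rcases le_or_gt R₀ ‖w‖ with h | h
      · have := hbd w h
        rw [pow_zero, mul_one] at this
        exact this.trans (le_max_right _ _)
      · have hw : w ∈ closedBall (0 : ℂ) (max R₀ 0) := by
          rw [mem_closedBall, dist_zero_right]
          exact le_max_of_le_left h.le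
        exact (hM w hw).trans (le_max_left _ _)
    obtain ⟨c0, hc0⟩ := hu.exists_const_forall_eq_of_bounded hbdd
    exact ⟨Polynomial.C c0, fun z => by simp [hc0 z]⟩
  | succ m ih =>
    intro u hu C R₀ hbd
    set u₁ := dslope u 0 with hu₁
    have hdiff : Differentiable ℂ u₁ := by
      have h := (differentiableOn_dslope (s := Set.univ) (c := (0 : ℂ))
        Filter.univ_mem).mpr hu.differentiableOn
      rw [← differentiableOn_univ]
      exact h
    have hrel : ∀ z, u z = u 0 + z * u₁ z := by
      intro z
      rcases eq_or_ne z 0 with rfl | hz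
      · simp
      · rw [hu₁, dslope_of_ne _ hz, slope_def_field]
        field_simp; ring
    have hb1 : ∀ w : ℂ, max R₀ 1 ≤ ‖w‖ → ‖u₁ w‖ ≤ (C + ‖u 0‖) * ‖w‖ ^ m := by
      intro w hw
      have hw1 : (1 : ℝ) ≤ ‖w‖ := le_trans (le_max_right _ _) hw
      have hwne : w ≠ 0 := by
        intro h; rw [h] at hw1; simp at hw1; linarith
      have hwR : R₀ ≤ ‖w‖ := le_trans (le_max_left _ _) hw
      have h0 := hbd w hwR
      have h1 : ‖u₁ w‖ = ‖u w - u 0‖ / ‖w‖ := by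
        rw [hu₁, dslope_of_ne _ hwne, slope_def_field]
        rw [norm_div]
        simp
      rw [h1]
      rw [div_le_iff₀ (by linarith)]
      have h2 : ‖u w - u 0‖ ≤ C * ‖w‖ ^ (m + 1) + ‖u 0‖ :=
        le_trans (norm_sub_le _ _) (by linarith)
      have h3 : (1 : ℝ) ≤ ‖w‖ ^ (m + 1) := one_le_pow₀ hw1
      have h4 : ‖u 0‖ ≤ ‖u 0‖ * ‖w‖ ^ (m + 1) := le_mul_of_one_le_right (norm_nonneg _) h3
      have h5 : (C + ‖u 0‖) * ‖w‖ ^ m * ‖w‖ = (C + ‖u 0‖) * ‖w‖ ^ (m + 1) := by ring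
      rw [h5]
      calc ‖u w - u 0‖ ≤ C * ‖w‖ ^ (m + 1) + ‖u 0‖ * ‖w‖ ^ (m + 1) := by linarith
        _ = (C + ‖u 0‖) * ‖w‖ ^ (m + 1) := by ring
    obtain ⟨p₁, hp₁⟩ := ih u₁ hdiff (C + ‖u 0‖) (max R₀ 1) hb1
    refine ⟨Polynomial.C (u 0) + Polynomial.X * p₁, fun z => ?_⟩
    rw [hrel z, hp₁ z]
    simp

end Growth

section InjAffine

lemma one_le_norm_inv {z : ℂ} (h0 : z ≠ 0) (h1 : ‖z‖ < 1) : 1 ≤ ‖z⁻¹‖ := by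
  have hp : 0 < ‖z‖ := norm_pos_iff.mpr h0
  rw [norm_inv]
  have h2 : ‖z‖ * 1 < ‖z‖ * ‖z‖⁻¹ := by
    rw [mul_one, mul_inv_cancel₀ hp.ne']
    exact h1
  have := lt_of_mul_lt_mul_left h2 hp.le
  linarith

lemma injective_poly_affine {p : Polynomial ℂ} (hinj : Function.Injective fun z => p.eval z) :
    ∃ a b : ℂ, ∀ z, p.eval z = a * z + b := by
  have hn1 : p.natDegree ≤ 1 := by
    by_contra hgt
    push_neg at hgt
    set q := p - Polynomial.C (p.eval 0) with hq
    have hqdeg : q.natDegree = p.natDegree := Polynomial.natDegree_sub_C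
    have hqne : q ≠ 0 := by
      intro h
      rw [h] at hqdeg
      simp at hqdeg
      omega
    have hsplit : Polynomial.Splits q := IsAlgClosed.splits q
    have hcard : Multiset.card q.roots = p.natDegree := by
      rw [← hqdeg]
      exact Polynomial.splits_iff_card_roots.mp hsplit
    have hqeval : ∀ z, q.eval z = p.eval z - p.eval 0 := by
      intro z; simp [hq]
    have hroots : ∀ r ∈ q.roots, r = (0 : ℂ) := by
      intro r hr
      have h1 := (Polynomial.mem_roots'.mp hr).2
      rw [Polynomial.IsRoot, hqeval] at h1
      exact hinj (sub_eq_zero.mp h1)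
    have hrepl : q.roots = Multiset.replicate p.natDegree 0 :=
      Multiset.eq_replicate.mpr ⟨hcard, hroots⟩
    have hfact := hsplit.eq_prod_roots
    rw [hrepl] at hfact
    have heval : ∀ z, q.eval z = q.leadingCoeff * z ^ p.natDegree := by
      intro z
      conv_lhs => rw [hfact]
      rw [Multiset.map_replicate, Multiset.prod_replicate]
      simp
    have hne0 : p.natDegree ≠ 0 := by omega
    have hprim := Complex.isPrimitiveRoot_exp p.natDegree hne0
    set ζ : ℂ := Complex.exp (2 * Real.pi * Complex.I / p.natDegree) with hζdef
    have hζn : ζ ^ p.natDegree = 1 := hprim.pow_eq_one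
    have hζ1 : ζ ≠ 1 := hprim.ne_one (by omega)
    have e1 : p.eval ζ = p.eval 1 := by
      have a1 : q.eval ζ = q.leadingCoeff := by rw [heval, hζn, mul_one]
      have a2 : q.eval (1 : ℂ) = q.leadingCoeff := by rw [heval, one_pow, mul_one]
      have a3 : q.eval ζ = q.eval 1 := by rw [a1, a2]
      rw [hqeval, hqeval] at a3
      exact sub_left_inj.mp a3
    exact hζ1 (hinj e1)
  have hdeg : p.degree ≤ 1 := le_trans Polynomial.degree_le_natDegree (by exact_mod_cast hn1)
  have hform := Polynomial.eq_X_add_C_of_degree_le_one hdeg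
  refine ⟨p.coeff 1, p.coeff 0, fun z => ?_⟩
  conv_lhs => rw [hform]
  simp

lemma injective_entire_affine {u : ℂ → ℂ} (hu : Differentiable ℂ u)
    (hinj : Function.Injective u) : ∃ a b : ℂ, ∀ z, u z = a * z + b := by
  classical
  rcases (hu.analyticAt 0).eventually_constant_or_nhds_le_map_nhds with hconst | hmap
  · exfalso
    obtain ⟨ε, hε, h⟩ := Metric.eventually_nhds_iff.mp hconst
    have h1 : u ((ε / 2 : ℝ) : ℂ) = u 0 := by
      apply h
      rw [dist_zero_right, Complex.norm_real, Real.norm_of_nonneg (by linarith)]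
      linarith
    have h2 := hinj h1
    have h3 : (ε / 2 : ℝ) = 0 := by exact_mod_cast h2
    linarith
  · have himg : u '' ball 0 1 ∈ 𝓝 (u 0) := by
      apply hmap
      rw [Filter.mem_map]
      exact Filter.mem_of_superset (ball_mem_nhds _ one_pos) (Set.subset_preimage_image u _)
    obtain ⟨ε, hε, hball⟩ := Metric.mem_nhds_iff.mp himg
    have hmiss : ∀ z : ℂ, 1 ≤ ‖z‖ → ε ≤ ‖u z - u 0‖ := by
      intro z hz
      by_contra hlt
      push_neg at hlt
      have hm : u z ∈ ball (u 0) ε := by rwa [mem_ball, dist_eq_norm]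
      obtain ⟨z', hz', hz'e⟩ := hball hm
      have hzz := hinj hz'e
      rw [hzz] at hz'
      rw [mem_ball, dist_zero_right] at hz'
      linarith
    set q : ℂ → ℂ := fun z => (u z⁻¹ - u 0)⁻¹ with hqdef
    have hikey : ∀ z : ℂ, ‖z‖ < 1 → z ≠ 0 → u z⁻¹ - u 0 ≠ 0 := by
      intro z hz hzne
      have h1 : 1 ≤ ‖z⁻¹‖ := one_le_norm_inv hzne hz
      intro hEq
      have := hmiss z⁻¹ h1
      rw [hEq, norm_zero] at this
      linarith
    have hqdiff : DifferentiableOn ℂ q (ball 0 1 \ {0}) := by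
      rintro z ⟨hz1, hz0⟩
      rw [mem_ball, dist_zero_right] at hz1
      have hzne : z ≠ 0 := by simpa using hz0
      apply DifferentiableAt.differentiableWithinAt
      apply DifferentiableAt.inv
      · exact ((hu (z⁻¹)).comp z (differentiableAt_inv hzne)).sub_const _
      · exact hikey z hz1 hzne
    have hqbdd : BddAbove (norm ∘ q '' (ball 0 1 \ {0})) := by
      refine ⟨ε⁻¹, ?_⟩
      rintro x ⟨z, ⟨hz1, hz0⟩, rfl⟩
      rw [mem_ball, dist_zero_right] at hz1
      have hzne : z ≠ 0 := by simpa using hz0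
      have h1 : 1 ≤ ‖z⁻¹‖ := one_le_norm_inv hzne hz1
      have h2 := hmiss z⁻¹ h1
      simp only [Function.comp_apply, hqdef, norm_inv]
      exact inv_anti₀ hε h2
    set Q := Function.update q 0 (limUnder (𝓝[≠] (0 : ℂ)) q) with hQdef
    have hQdiff : DifferentiableOn ℂ Q (ball 0 1) :=
      Complex.differentiableOn_update_limUnder_of_bddAbove (ball_mem_nhds _ one_pos) hqdiff hqbdd
    have hQana : AnalyticAt ℂ Q 0 := hQdiff.analyticAt (ball_mem_nhds _ one_pos)
    have hQq : ∀ z : ℂ, z ≠ 0 → Q z = q z := fun z hz => Function.update_of_ne hz _ _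
    have hnotall : ¬ ∀ᶠ z in 𝓝 (0 : ℂ), Q z = 0 := by
      intro hev
      obtain ⟨δ, hδ, h⟩ := Metric.eventually_nhds_iff.mp hev
      have hmin : 0 < min δ 1 := lt_min hδ one_pos
      set z : ℂ := ((min δ 1 / 2 : ℝ) : ℂ) with hzdef
      have hz0 : z ≠ 0 := by
        simp only [hzdef, Ne, Complex.ofReal_eq_zero]
        intro hcontra
        linarith
      have hznorm : ‖z‖ = min δ 1 / 2 := by
        rw [hzdef, Complex.norm_real, Real.norm_of_nonneg (by linarith)]
      have hz1 : ‖z‖ < 1 := by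
        rw [hznorm]
        have := min_le_right δ 1
        linarith
      have hzd : dist z 0 < δ := by
        rw [dist_zero_right, hznorm]
        have := min_le_left δ 1
        linarith
      have hQz := h hzd
      rw [hQq z hz0, hqdef] at hQz
      exact (inv_ne_zero (hikey z hz1 hz0)) hQz
    have horder : analyticOrderAt Q 0 ≠ ⊤ := fun h => hnotall (analyticOrderAt_eq_top.mp h)
    obtain ⟨m, hm⟩ := WithTop.ne_top_iff_exists.mp horder
    obtain ⟨g, hgana, hg0, hgeq⟩ := (hQana.analyticOrderAt_eq_natCast (n := m)).mp hm.symm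
    have hgpos : 0 < ‖g 0‖ := norm_pos_iff.mpr hg0
    have hglow : ∀ᶠ z in 𝓝 (0 : ℂ), ‖g 0‖ / 2 < ‖g z‖ :=
      ContinuousAt.eventually_lt continuousAt_const hgana.continuousAt.norm (by linarith)
    obtain ⟨δ₁, hδ₁, hg1⟩ := Metric.eventually_nhds_iff.mp (hglow.and hgeq)
    have hmin1 : 0 < min δ₁ 1 := lt_min hδ₁ one_pos
    set R₁ : ℝ := max (2 / min δ₁ 1) 1 with hR₁
    have hgrow : ∀ w : ℂ, R₁ ≤ ‖w‖ → ‖u w‖ ≤ (‖u 0‖ + 2 / ‖g 0‖) * ‖w‖ ^ m := by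
      intro w hw
      have hw1 : (1 : ℝ) ≤ ‖w‖ := le_trans (le_max_right _ _) hw
      have hwpos : (0:ℝ) < ‖w‖ := by linarith
      have hwne : w ≠ 0 := by
        intro h; rw [h, norm_zero] at hw1; linarith
      set z := w⁻¹ with hzw
      have hzne : z ≠ 0 := inv_ne_zero hwne
      have hznorm : ‖z‖ = ‖w‖⁻¹ := norm_inv w
      have hzsmall : ‖z‖ < min δ₁ 1 := by
        rw [hznorm]
        have h2 : 2 / min δ₁ 1 ≤ ‖w‖ := le_trans (le_max_left _ _) hw
        have h3 : ‖w‖⁻¹ ≤ (2 / min δ₁ 1)⁻¹ := inv_anti₀ (by positivity) h2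
        have h4 : (2 / min δ₁ 1)⁻¹ = min δ₁ 1 / 2 := by
          rw [inv_div]
        rw [h4] at h3
        linarith
      have hzd : dist z 0 < δ₁ := by
        rw [dist_zero_right]
        exact lt_of_lt_of_le hzsmall (min_le_left _ _)
      obtain ⟨hglow', hQz⟩ := hg1 hzd
      rw [hQq z hzne] at hQz
      have hz1ball : ‖z‖ < 1 := lt_of_lt_of_le hzsmall (min_le_right _ _)
      have hune : u z⁻¹ - u 0 ≠ 0 := hikey z hz1ball hzne
      have hinvw : z⁻¹ = w := inv_inv w
      rw [hinvw] at hune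
      have hXpos : (0:ℝ) < ‖u w - u 0‖ := norm_pos_iff.mpr hune
      have hnormq : ‖q z‖ = ‖u w - u 0‖⁻¹ := by
        rw [hqdef]
        simp only []
        rw [hinvw, norm_inv]
      have hQnorm : ‖q z‖ = ‖z‖ ^ m * ‖g z‖ := by
        rw [hQz]
        rw [sub_zero, norm_smul, norm_pow]
      have hlow : ‖g 0‖ / 2 * ‖z‖ ^ m ≤ ‖q z‖ := by
        rw [hQnorm]
        have : (0:ℝ) ≤ ‖z‖ ^ m := by positivity
        nlinarith [hglow'.le]
      -- conclude
      have hzpow : ‖z‖ ^ m = (‖w‖ ^ m)⁻¹ := by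
        rw [hznorm, inv_pow]
      have hcpos : (0:ℝ) < ‖g 0‖ / 2 * ‖z‖ ^ m := by
        have hzp : (0:ℝ) < ‖z‖ ^ m := pow_pos (norm_pos_iff.mpr hzne) m
        have : (0:ℝ) < ‖g 0‖ / 2 := by linarith
        exact mul_pos this hzp
      have hXinv : ‖g 0‖ / 2 * ‖z‖ ^ m ≤ ‖u w - u 0‖⁻¹ := by
        rw [← hnormq]; exact hlow
      have hXle : ‖u w - u 0‖ ≤ (‖g 0‖ / 2 * ‖z‖ ^ m)⁻¹ := by
        have h5 := inv_anti₀ hcpos hXinv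
        rwa [inv_inv] at h5
      have hfinal : (‖g 0‖ / 2 * ‖z‖ ^ m)⁻¹ = 2 / ‖g 0‖ * ‖w‖ ^ m := by
        rw [hzpow]
        rw [mul_inv, inv_inv, inv_div]
        all_goals ring
      rw [hfinal] at hXle
      have h6 : ‖u w‖ ≤ ‖u 0‖ + 2 / ‖g 0‖ * ‖w‖ ^ m := by
        have h7 : ‖u w‖ - ‖u 0‖ ≤ ‖u w - u 0‖ := by
          have := norm_sub_norm_le (u w) (u 0)
          linarith
        linarith
      have h8 : (1:ℝ) ≤ ‖w‖ ^ m := one_le_pow₀ hw1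
      have h9 : ‖u 0‖ ≤ ‖u 0‖ * ‖w‖ ^ m := le_mul_of_one_le_right (norm_nonneg _) h8
      calc ‖u w‖ ≤ ‖u 0‖ + 2 / ‖g 0‖ * ‖w‖ ^ m := h6
        _ ≤ ‖u 0‖ * ‖w‖ ^ m + 2 / ‖g 0‖ * ‖w‖ ^ m := by linarith
        _ = (‖u 0‖ + 2 / ‖g 0‖) * ‖w‖ ^ m := by ring
    obtain ⟨p, hp⟩ := polynomial_of_growth m u hu _ R₁ hgrow
    have hpinj : Function.Injective fun z => p.eval z := by
      have hpe : (fun z => p.eval z) = u := funext fun z => (hp z).symm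
      rw [hpe]; exact hinj
    obtain ⟨a, b, hab⟩ := injective_poly_affine hpinj
    exact ⟨a, b, fun z => by rw [hp z, hab z]⟩

end InjAffine

section Scalar

lemma scalar_complete_affine {g : ℂ → ℂ} (hg : Differentiable ℂ g)
    (hcomp : ∀ c : ℂ, ∃ h : ℂ → ℂ, h 0 = c ∧ ∀ t, HasDerivAt h (g (h t)) t) :
    ∃ a b : ℂ, ∀ t, g t = a * t + b := by
  classical
  have hVlip : ∀ x : ℂ, ∃ K : NNReal, ∃ s ∈ 𝓝 x, LipschitzOnWith K g s := by
    intro x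
    exact ((hg.contDiff (n := 1)).contDiffAt).exists_lipschitzOnWith
  have huniq : ∀ (x₁ x₂ : ℂ → ℂ), (∀ t, HasDerivAt x₁ (g (x₁ t)) t) →
      (∀ t, HasDerivAt x₂ (g (x₂ t)) t) → x₁ 0 = x₂ 0 → x₁ = x₂ := by
    intro x₁ x₂ h₁ h₂ h0
    apply ode_complex_unique (V := g) hVlip (α := fun _ => (1 : ℂ)) continuous_const ?_ ?_ h0
    · intro t; simpa using h₁ t
    · intro t; simpa using h₂ t
  obtain ⟨Fl, hFl0, hFld⟩ : ∃ Fl : ℂ → ℂ → ℂ, (∀ c, Fl c 0 = c) ∧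
      ∀ c t, HasDerivAt (Fl c) (g (Fl c t)) t := by
    choose Fl h1 h2 using hcomp
    exact ⟨Fl, h1, h2⟩
  have flow_unique : ∀ (c : ℂ) (h : ℂ → ℂ), h 0 = c → (∀ t, HasDerivAt h (g (h t)) t) →
      h = Fl c := by
    intro c h h0 hd
    exact huniq h (Fl c) hd (hFld c) (by rw [h0, hFl0])
  have group : ∀ (c t s : ℂ), Fl c (t + s) = Fl (Fl c t) s := by
    intro c t s
    have hD : ∀ s : ℂ, HasDerivAt (fun s => Fl c (t + s)) (g (Fl c (t + s))) s := by
      intro s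
      have h2 : HasDerivAt (fun s : ℂ => t + s) 1 s := by
        simpa using (hasDerivAt_id s).const_add t
      have := (hFld c (t + s)).scomp s h2
      simp at this; exact this
    have := flow_unique (Fl c t) (fun s => Fl c (t + s)) (by simp) hD
    exact congrFun this s
  have hfix : ∀ c : ℂ, g c = 0 → ∀ t, Fl c t = c := by
    intro c hc t
    have hconstd : ∀ t : ℂ, HasDerivAt (fun _ : ℂ => c) (g c) t := by
      intro t
      rw [hc]
      exact hasDerivAt_const t c
    have := flow_unique c (fun _ => c) rfl hconstd
    exact (congrFun this t).symm
  have havoid : ∀ c : ℂ, g c ≠ 0 → ∀ t, g (Fl c t) ≠ 0 := by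
    intro c hc t h0
    apply hc
    have h1 : Fl c (t + -t) = Fl (Fl c t) (-t) := group c t (-t)
    rw [add_neg_cancel, hFl0, hfix _ h0] at h1
    rw [h1]
    exact h0
  have hinj : ∀ t : ℂ, Function.Injective (fun c => Fl c t) := by
    intro t c₁ c₂ hcc
    simp only at hcc
    have e1 : Fl c₁ (t + -t) = Fl (Fl c₁ t) (-t) := group c₁ t (-t)
    have e2 : Fl c₂ (t + -t) = Fl (Fl c₂ t) (-t) := group c₂ t (-t)
    rw [add_neg_cancel, hFl0] at e1 e2
    rw [e1, e2, hcc]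
  by_cases hconst : ∀ t, g t = g 0
  · exact ⟨0, g 0, fun t => by rw [hconst t]; ring⟩
  push_neg at hconst
  obtain ⟨t₁, ht₁⟩ := hconst
  have hiso : ∀ c₁ : ℂ, ∀ᶠ z in 𝓝[≠] c₁, g z ≠ 0 := by
    intro c₁
    rcases (hg.analyticAt c₁).eventually_eq_zero_or_eventually_ne_zero with h | h
    · exfalso
      have hga : AnalyticOnNhd ℂ g univ := fun z _ => hg.analyticAt z
      have hzero := hga.eqOn_zero_of_preconnected_of_eventuallyEq_zero
        isPreconnected_univ (mem_univ c₁) h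
      apply ht₁
      rw [hzero (mem_univ t₁), hzero (mem_univ 0)]
      rfl
    · exact h
  -- local flow formula near non-critical points
  have hdiffoff : ∀ p : ℂ, g p ≠ 0 → ∃ δ > 0, ∃ G : ℂ → ℂ,
      DifferentiableOn ℂ G (ball p δ) ∧ ∀ c ∈ ball p δ, ∀ t, Fl c t = Fl p (G c + t) := by
    intro p hp
    have hev : ∀ᶠ z in 𝓝 p, g z ≠ 0 := hg.continuous.continuousAt.eventually_ne hp
    obtain ⟨ρ, hρ, hgne⟩ := Metric.eventually_nhds_iff.mp hev
    have hinv_diff : DifferentiableOn ℂ (fun z => (g z)⁻¹) (ball p ρ) := by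
      intro z hz
      exact ((hg z).inv (hgne (mem_ball.mp hz))).differentiableWithinAt
    obtain ⟨G, hG0, hGd⟩ := exists_primitive_ball hinv_diff (half_pos hρ) (half_lt_self hρ)
    have hGdiffOn : DifferentiableOn ℂ G (ball p (ρ / 2)) := fun z hz =>
      (hGd z hz).differentiableAt.differentiableWithinAt
    have hGana : AnalyticAt ℂ G p := hGdiffOn.analyticAt (ball_mem_nhds _ (half_pos hρ))
    have hGstrict : HasStrictDerivAt G (g p)⁻¹ p := by
      have h1 : ContDiffAt ℂ 1 G p := hGana.contDiffAt
      have h2 := h1.hasStrictDerivAt one_ne_zero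
      rwa [(hGd p (mem_ball_self (half_pos hρ))).deriv] at h2
    obtain ⟨δ₀, hδ₀, hGinj⟩ := inj_of_hasStrictDerivAt hGstrict (inv_ne_zero hp)
    set w : ℂ → ℂ := fun c => Fl p (G c) with hwdef
    have hwp : w p = p := by rw [hwdef]; simp only; rw [hG0, hFl0]
    have hwderiv : ∀ c ∈ ball p (ρ / 2), HasDerivAt w ((g c)⁻¹ * g (w c)) c := by
      intro c hc
      have h1 := (hFld p (G c)).scomp c (hGd c hc)
      simp [smul_eq_mul] at h1; exact h1
    have hwcont : ContinuousAt w p :=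
      (hwderiv p (mem_ball_self (half_pos hρ))).differentiableAt.continuousAt
    obtain ⟨r₂', hr₂', hsub₂⟩ : ∃ r > 0, ball p r ⊆ w ⁻¹' ball p (ρ / 2) := by
      have : ball p (ρ / 2) ∈ 𝓝 (w p) := by rw [hwp]; exact ball_mem_nhds _ (half_pos hρ)
      exact Metric.mem_nhds_iff.mp (hwcont.preimage_mem_nhds this)
    obtain ⟨r₃', hr₃', hsub₃⟩ : ∃ r > 0, ball p r ⊆ w ⁻¹' ball p δ₀ := by
      have : ball p δ₀ ∈ 𝓝 (w p) := by rw [hwp]; exact ball_mem_nhds _ hδ₀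
      exact Metric.mem_nhds_iff.mp (hwcont.preimage_mem_nhds this)
    set r₂ : ℝ := min r₂' (ρ / 2) with hr₂def
    have hr₂pos : 0 < r₂ := lt_min hr₂' (half_pos hρ)
    have hGwG : EqOn (G ∘ w) G (ball p r₂) := by
      apply primitive_unique (u := fun z => (g z)⁻¹)
      · intro c hc
        have hcball : c ∈ ball p (ρ / 2) := ball_subset_ball (min_le_right _ _) hc
        have hwball : w c ∈ ball p (ρ / 2) :=
          hsub₂ (ball_subset_ball (min_le_left _ _) hc)
        have h1 := (hGd (w c) hwball).scomp c (hwderiv c hcball)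
        have hgwne : g (w c) ≠ 0 := havoid p hp (G c)
        have hgcne : g c ≠ 0 := by
          apply hgne
          have := mem_ball.mp hcball
          linarith
        have h2 : ((g c)⁻¹ * g (w c)) • (g (w c))⁻¹ = (g c)⁻¹ := by
          rw [smul_eq_mul]
          field_simp
          all_goals ring
        rwa [h2] at h1
      · intro c hc
        exact hGd c (ball_subset_ball (min_le_right _ _) hc)
      · rw [Function.comp_apply, hwp]
    set r₃ : ℝ := min (min r₃' δ₀) r₂ with hr₃def
    have hr₃pos : 0 < r₃ := lt_min (lt_min hr₃' hδ₀) hr₂pos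
    have hwid : ∀ c ∈ ball p r₃, w c = c := by
      intro c hc
      have hc₀ : c ∈ ball p δ₀ :=
        ball_subset_ball (le_trans (min_le_left _ _) (min_le_right _ _)) hc
      have hcw : w c ∈ ball p δ₀ :=
        hsub₃ (ball_subset_ball (le_trans (min_le_left _ _) (min_le_left _ _)) hc)
      have hG : G (w c) = G c := hGwG (ball_subset_ball (min_le_right _ _) hc)
      exact hGinj hcw hc₀ hG
    refine ⟨r₃, hr₃pos, G, hGdiffOn.mono (ball_subset_ball ?_), ?_⟩
    · exact le_trans (min_le_right _ _) (min_le_right _ _)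
    intro c hc t
    have hx₂d : ∀ s : ℂ, HasDerivAt (fun s => Fl p (G c + s)) (g (Fl p (G c + s))) s := by
      intro s
      have h2 : HasDerivAt (fun s : ℂ => G c + s) 1 s := by
        simpa using (hasDerivAt_id s).const_add (G c)
      have := (hFld p (G c + s)).scomp s h2
      simp at this; exact this
    have hx₂0 : (fun s => Fl p (G c + s)) 0 = c := by
      simp only [add_zero]
      exact hwid c hc
    have := flow_unique c (fun s => Fl p (G c + s)) hx₂0 hx₂d
    exact (congrFun this t).symm
  -- global differentiability of the time-t map
  have hdiffall : ∀ t : ℂ, Differentiable ℂ (fun c => Fl c t) := by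
    intro t c₁
    by_cases hc₁ : g c₁ = 0
    · -- continuity at the fixed point via Gronwall, then removable singularity
      obtain ⟨K₀, sl, hsl, hK₀⟩ := hVlip c₁
      obtain ⟨r', hr'pos, hr'sub⟩ := Metric.mem_nhds_iff.mp hsl
      set r : ℝ := r' / 2 with hrdef
      have hrpos : 0 < r := half_pos hr'pos
      have hrsub : closedBall c₁ r ⊆ sl := by
        refine subset_trans ?_ hr'sub
        intro x hx
        rw [mem_closedBall] at hx
        rw [mem_ball]
        have : r < r' := half_lt_self hr'pos
        linarith
      set κr : ℝ := ‖t‖ * (K₀ : ℝ) with hκrdef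
      have hκr0 : 0 ≤ κr := by positivity
      set B : ℝ := Real.exp κr with hBdef
      have hB1 : 1 ≤ B := by
        rw [hBdef]
        nlinarith [Real.add_one_le_exp κr]
      have hBpos : 0 < B := by linarith
      have key : ∀ c : ℂ, dist c c₁ ≤ r / (4 * B) →
          ∀ s ∈ Icc (0:ℝ) 1, dist (Fl c ((s : ℂ) * t)) c₁ ≤ dist c c₁ * Real.exp (κr * s) := by
        intro c hc
        set y : ℝ → ℂ := fun s => Fl c ((s : ℂ) * t) with hydef
        have hyd : ∀ s : ℝ, HasDerivAt y (t • g (y s)) s := by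
          intro s
          have h2 : HasDerivAt (fun s : ℝ => (s : ℂ) * t) t s := by
            simpa using (Complex.ofRealCLM.hasDerivAt (x := s)).mul_const t
          have := (hFld c ((s : ℂ) * t)).scomp s h2
          simp at this; exact this
        have hycont : ∀ s, ContinuousAt y s := fun s => (hyd s).continuousAt
        have hy0 : y 0 = c := by
          rw [hydef]
          simp only [Complex.ofReal_zero, zero_mul]
          exact hFl0 c
        have hv : ∀ s : ℝ, LipschitzOnWith (‖t‖₊ * K₀) (fun x => t • g x) (closedBall c₁ r) :=
          fun _ => lipschitzOnWith_csmul (hK₀.mono hrsub) t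
        have hκcoe : ((‖t‖₊ * K₀ : NNReal) : ℝ) = κr := by
          rw [hκrdef]
          push_cast
          rfl
        set A : Set ℝ := {s | s ∈ Icc (0:ℝ) 1 ∧ ∀ s' ∈ Icc (0:ℝ) s, dist (y s') c₁ ≤ r / 2}
          with hAdef
        have hdc_half : dist c c₁ ≤ r / 2 := by
          have h1 : r / (4 * B) ≤ r / 4 := by
            apply div_le_div_of_nonneg_left hrpos.le (by norm_num) ?_ |>.trans_eq rfl
            · linarith
          calc dist c c₁ ≤ r / (4 * B) := hc
            _ ≤ r / 4 := h1
            _ ≤ r / 2 := by linarith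
        have hA0 : (0:ℝ) ∈ A := by
          refine ⟨⟨le_rfl, zero_le_one⟩, ?_⟩
          intro s' hs'
          have hs'0 : s' = 0 := le_antisymm hs'.2 hs'.1
          rw [hs'0, hy0]
          exact hdc_half
        have est : ∀ s₀, s₀ ∈ A → ∀ s ∈ Icc (0:ℝ) s₀,
            dist (y s) c₁ ≤ dist c c₁ * Real.exp (κr * s) := by
          intro s₀ hs₀ s hs
          have hcont : ContinuousOn y (Icc 0 s₀) := fun x _ => (hycont x).continuousWithinAt
          have hf' : ∀ x ∈ Ico (0:ℝ) s₀, HasDerivWithinAt y (t • g (y x)) (Ici x) x :=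
            fun x _ => (hyd x).hasDerivWithinAt
          have hfs : ∀ x ∈ Ico (0:ℝ) s₀, y x ∈ closedBall c₁ r := by
            intro x hx
            rw [mem_closedBall]
            have := hs₀.2 x ⟨hx.1, hx.2.le⟩
            linarith
          have hgc : ContinuousOn (fun _ : ℝ => c₁) (Icc 0 s₀) := continuousOn_const
          have hg' : ∀ x ∈ Ico (0:ℝ) s₀,
              HasDerivWithinAt (fun _ : ℝ => c₁) (t • g c₁) (Ici x) x := by
            intro x _
            rw [hc₁, smul_zero]
            exact (hasDerivWithinAt_const x _ c₁)
          have hgs : ∀ x ∈ Ico (0:ℝ) s₀, c₁ ∈ closedBall c₁ r :=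
            fun x _ => mem_closedBall_self hrpos.le
          have ha : dist (y 0) c₁ ≤ dist c c₁ := by rw [hy0]
          have h1 := dist_le_of_trajectories_ODE_of_mem (fun s _ => hv s) hcont hf' hfs hgc hg' hgs ha s hs
          rw [hκcoe] at h1
          simpa using h1
        have hAbdd : BddAbove A := ⟨1, fun x hx => hx.1.2⟩
        have hAne : A.Nonempty := ⟨0, hA0⟩
        set S := sSup A with hSdef
        have hS0 : 0 ≤ S := le_csSup hAbdd hA0
        have hS1 : S ≤ 1 := csSup_le hAne (fun x hx => hx.1.2)
        have hSinA : S ∈ A := by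
          refine ⟨⟨hS0, hS1⟩, ?_⟩
          intro s' hs'
          rcases lt_or_eq_of_le hs'.2 with hlt | heq
          · obtain ⟨a', ha'A, ha'⟩ := exists_lt_of_lt_csSup hAne hlt
            exact ha'A.2 s' ⟨hs'.1, ha'.le⟩
          · by_contra hgt
            push_neg at hgt
            have hco : ContinuousAt (fun s => dist (y s) c₁) s' :=
              (hycont s').dist continuousAt_const
            have hev2 : ∀ᶠ s in 𝓝 s', r / 2 < dist (y s) c₁ :=
              ContinuousAt.eventually_lt continuousAt_const hco hgt
            obtain ⟨η, hη, hev3⟩ := Metric.eventually_nhds_iff.mp hev2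
            obtain ⟨a', ha'A, ha'⟩ := exists_lt_of_lt_csSup hAne
              (show S - η < S by linarith)
            have ha'le : a' ≤ S := le_csSup hAbdd ha'A
            have hd1 : dist (y a') c₁ ≤ r / 2 := ha'A.2 a' ⟨ha'A.1.1, le_rfl⟩
            have hd2 : r / 2 < dist (y a') c₁ := by
              apply hev3
              rw [Real.dist_eq, heq, abs_of_nonpos (by linarith)]
              linarith
            linarith
        have hSeq1 : S = 1 := by
          by_contra hne
          have hSlt : S < 1 := lt_of_le_of_ne hS1 hne
          have hd := est S hSinA S ⟨hS0, le_rfl⟩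
          have hexp : Real.exp (κr * S) ≤ B := by
            rw [hBdef]
            apply Real.exp_le_exp.mpr
            nlinarith
          have hd2 : dist (y S) c₁ ≤ r / 4 := by
            calc dist (y S) c₁ ≤ dist c c₁ * Real.exp (κr * S) := hd
              _ ≤ (r / (4 * B)) * B := by
                  apply mul_le_mul hc hexp (Real.exp_pos _).le
                  positivity
              _ = r / 4 := by field_simp
          have hco : ContinuousAt (fun s => dist (y s) c₁) S :=
            (hycont S).dist continuousAt_const
          have hev2 : ∀ᶠ s in 𝓝 S, dist (y s) c₁ < r / 2 :=
            ContinuousAt.eventually_lt hco continuousAt_const (by linarith)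
          obtain ⟨η, hη, hev3⟩ := Metric.eventually_nhds_iff.mp hev2
          set s₁ : ℝ := min (S + η / 2) 1 with hs₁def
          have hs₁S : S < s₁ := lt_min (by linarith) hSlt
          have hs₁A : s₁ ∈ A := by
            refine ⟨⟨by linarith, min_le_right _ _⟩, ?_⟩
            intro s' hs'
            rcases le_or_gt s' S with h | h
            · exact hSinA.2 s' ⟨hs'.1, h⟩
            · apply (hev3 ?_).le
              rw [Real.dist_eq, abs_of_pos (by linarith)]
              have h1 : s' ≤ s₁ := hs'.2
              have h2 : s₁ ≤ S + η / 2 := min_le_left _ _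
              linarith
          have := le_csSup hAbdd hs₁A
          linarith
        intro s hs
        exact est 1 (hSeq1 ▸ hSinA) s hs
      -- continuity at c₁
      have hFlfix : Fl c₁ t = c₁ := hfix c₁ hc₁ t
      have hcont : ContinuousAt (fun c => Fl c t) c₁ := by
        rw [Metric.continuousAt_iff]
        intro ε hε
        refine ⟨min (r / (4 * B)) (ε / (2 * B)), by positivity, ?_⟩
        intro c hcd
        have h1 := key c (le_trans hcd.le (min_le_left _ _)) 1 ⟨zero_le_one, le_rfl⟩
        have h2 : ((1:ℝ) : ℂ) * t = t := by norm_num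
        rw [h2] at h1
        rw [hFlfix]
        have h3 : Real.exp (κr * 1) = B := by rw [hBdef, mul_one]
        rw [h3] at h1
        have h4 : dist c c₁ < ε / (2 * B) := lt_of_lt_of_le hcd (min_le_right _ _)
        calc dist (Fl c t) c₁ ≤ dist c c₁ * B := h1
          _ < (ε / (2 * B)) * B := by
              apply mul_lt_mul_of_pos_right h4 hBpos
          _ = ε / 2 := by field_simp
          _ < ε := by linarith
      have hpunct : ∀ᶠ z in 𝓝[≠] c₁, DifferentiableAt ℂ (fun c => Fl c t) z := by
        filter_upwards [hiso c₁] with z hz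
        obtain ⟨δ, hδ, G, hGdiff, hform⟩ := hdiffoff z hz
        have heq : (fun c => Fl c t) =ᶠ[𝓝 z] (fun c => Fl z (G c + t)) := by
          filter_upwards [ball_mem_nhds z hδ] with c hcball
          exact hform c hcball t
        have hd : DifferentiableAt ℂ (fun c => Fl z (G c + t)) z := by
          have hGat : DifferentiableAt ℂ G z :=
            (hGdiff z (mem_ball_self hδ)).differentiableAt (ball_mem_nhds _ hδ)
          have hFl_ent : Differentiable ℂ (Fl z) := fun s => (hFld z s).differentiableAt
          exact DifferentiableAt.comp z (hFl_ent (G z + t)) (hGat.add_const t)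
        exact hd.congr_of_eventuallyEq heq
      exact (Complex.analyticAt_of_differentiable_on_punctured_nhds_of_continuousAt
        hpunct hcont).differentiableAt
    · obtain ⟨δ, hδ, G, hGdiff, hform⟩ := hdiffoff c₁ hc₁
      have heq : (fun c => Fl c t) =ᶠ[𝓝 c₁] (fun c => Fl c₁ (G c + t)) := by
        filter_upwards [ball_mem_nhds c₁ hδ] with c hcball
        exact hform c hcball t
      have hd : DifferentiableAt ℂ (fun c => Fl c₁ (G c + t)) c₁ := by
        have hGat : DifferentiableAt ℂ G c₁ :=
          (hGdiff c₁ (mem_ball_self hδ)).differentiableAt (ball_mem_nhds _ hδ)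
        have hFl_ent : Differentiable ℂ (Fl c₁) := fun s => (hFld c₁ s).differentiableAt
        exact DifferentiableAt.comp c₁ (hFl_ent (G c₁ + t)) (hGat.add_const t)
      exact hd.congr_of_eventuallyEq heq
  -- each time-t map is affine
  have haff : ∀ t c, Fl c t = (Fl 1 t - Fl 0 t) * c + Fl 0 t := by
    intro t c
    obtain ⟨a, b, hab⟩ := injective_entire_affine (hdiffall t) (hinj t)
    rw [hab c, hab 1, hab 0]
    ring
  have hF1 : HasDerivAt (fun t => Fl 1 t) (g 1) 0 := by
    have := hFld 1 0
    rwa [hFl0] at this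
  have hF0 : HasDerivAt (fun t => Fl 0 t) (g 0) 0 := by
    have := hFld 0 0
    rwa [hFl0] at this
  refine ⟨g 1 - g 0, g 0, ?_⟩
  intro c
  have h1 : HasDerivAt (fun t => Fl c t) (g c) 0 := by
    have := hFld c 0
    rwa [hFl0] at this
  have hcomb : HasDerivAt (fun t => (Fl 1 t - Fl 0 t) * c + Fl 0 t)
      ((g 1 - g 0) * c + g 0) 0 := ((hF1.sub hF0).mul_const c).add hF0
  have h2 : (fun t => Fl c t) = (fun t => (Fl 1 t - Fl 0 t) * c + Fl 0 t) :=
    funext fun t => haff t c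
  rw [h2] at h1
  exact h1.unique hcomb

end Scalar

/-- If `Y` is a complete holomorphic vector field on `ℂ²` with flow `φ`, and `f` is
holomorphic with `f·Y` also complete, then along every trajectory of `Y` through a point
`z` with `Y z ≠ 0` the function `f` is affine in the time parameter; consequently
`Y(Yf) = 0` on `ℂ²`. -/
theorem second_integral_affine_along_flow
    (Y : ℂ × ℂ → ℂ × ℂ) (f : ℂ × ℂ → ℂ)
    (hY : Differentiable ℂ Y) (hf : Differentiable ℂ f)
    (φ : ℂ → ℂ × ℂ → ℂ × ℂ)
    (hφ0 : ∀ z, φ 0 z = z)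
    (hφgroup : ∀ s t z, φ (s + t) z = φ s (φ t z))
    (hφode : ∀ t z, HasDerivAt (fun s => φ s z) (Y (φ t z)) t)
    (hfYcomplete : ∀ z : ℂ × ℂ, ∃ ψ : ℂ → ℂ × ℂ, ψ 0 = z ∧
      ∀ t, HasDerivAt ψ (f (ψ t) • Y (ψ t)) t) :
    (∀ z : ℂ × ℂ, Y z ≠ 0 → ∃ a b : ℂ, ∀ t : ℂ, f (φ t z) = a * t + b) ∧
    (∀ w : ℂ × ℂ, fderiv ℂ (fun z => fderiv ℂ f z (Y z)) w (Y w) = 0) := by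
  have hYlip := differentiable_locally_lipschitz hY
  have part1 : ∀ z : ℂ × ℂ, ∃ a b : ℂ, ∀ t : ℂ, f (φ t z) = a * t + b := by
    intro z
    set γ : ℂ → ℂ × ℂ := fun s => φ s z with hγ
    have hγd : ∀ s, HasDerivAt γ (Y (γ s)) s := fun s => hφode s z
    have hγdiff : Differentiable ℂ γ := fun s => (hγd s).differentiableAt
    set g : ℂ → ℂ := fun s => f (γ s) with hgdef
    have hgdiff : Differentiable ℂ g := hf.comp hγdiff
    have hscalar : ∀ c : ℂ, ∃ h : ℂ → ℂ, h 0 = c ∧ ∀ t, HasDerivAt h (g (h t)) t := by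
      intro c
      obtain ⟨ψ, hψ0, hψd⟩ := hfYcomplete (γ c)
      have hψdiff : Differentiable ℂ ψ := fun t => (hψd t).differentiableAt
      set α : ℂ → ℂ := fun t => f (ψ t) with hα
      have hαdiff : Differentiable ℂ α := hf.comp hψdiff
      obtain ⟨P, hP0, hPd⟩ := exists_primitive_entire hαdiff
      set h : ℂ → ℂ := fun t => c + P t with hh
      have hh0 : h 0 = c := by simp [hh, hP0]
      have hhd : ∀ t, HasDerivAt h (α t) t := fun t => by
        simpa [hh] using (hPd t).const_add c
      have hχd : ∀ t, HasDerivAt (fun t => γ (h t)) (α t • Y (γ (h t))) t := by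
        intro t
        exact (hγd (h t)).scomp t (hhd t)
      have hψd' : ∀ t, HasDerivAt ψ (α t • Y (ψ t)) t := fun t => hψd t
      have hαcont : Continuous α := hαdiff.continuous
      have hid : (fun t => γ (h t)) = ψ :=
        ode_complex_unique hYlip hαcont hχd hψd' (by rw [hh0, hψ0])
      refine ⟨h, hh0, ?_⟩
      intro t
      have h1 := hhd t
      have h2 : α t = g (h t) := by
        rw [hα, hgdef]
        simp only
        rw [congrFun hid t]
      rwa [h2] at h1
    exact scalar_complete_affine hgdiff hscalar
  constructor
  · intro z _
    exact part1 z
  · intro w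
    by_cases hd : DifferentiableAt ℂ (fun z => fderiv ℂ f z (Y z)) w
    · obtain ⟨a, b, hab⟩ := part1 w
      set Yf : ℂ × ℂ → ℂ := fun z => fderiv ℂ f z (Y z) with hYf
      have hGd : ∀ t, HasDerivAt (fun t => f (φ t w)) (Yf (φ t w)) t := by
        intro t
        have h1 := hφode t w
        have h2 : HasFDerivAt f (fderiv ℂ f (φ t w)) (φ t w) := (hf _).hasFDerivAt
        exact h2.comp_hasDerivAt t h1
      have hGd2 : ∀ t, HasDerivAt (fun t => f (φ t w)) a t := by
        intro t
        have heq : (fun t : ℂ => f (φ t w)) = fun t => a * t + b := funext hab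
        rw [heq]
        simpa using ((hasDerivAt_id t).const_mul a).add_const b
      have hHa : ∀ t, Yf (φ t w) = a := fun t => (hGd t).unique (hGd2 t)
      have h1 : HasDerivAt (fun t => φ t w) (Y w) 0 := by
        have := hφode 0 w
        rwa [hφ0 w] at this
      have h2 : HasFDerivAt Yf (fderiv ℂ Yf w) ((fun t => φ t w) 0) := by
        simp only [hφ0 w]
        exact hd.hasFDerivAt
      have hH : HasDerivAt (fun t => Yf (φ t w)) (fderiv ℂ Yf w (Y w)) 0 := by
        have := h2.comp_hasDerivAt 0 h1; exact this
      have hH0 : HasDerivAt (fun t => Yf (φ t w)) 0 0 := by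
        have heq : (fun t : ℂ => Yf (φ t w)) = fun _ => a := funext hHa
        rw [heq]
        exact hasDerivAt_const 0 a
      exact hH.unique hH0
    · rw [fderiv_zero_of_not_differentiableAt hd]
      rfl
end

section
/- Let Y be a complete holomorphic vector field on ℂ² and f a holomorphic function with f·Y complete. If Yf is a nonzero constant c, then every trajectory of Y through a point where Y ≠ 0 is of type ℂ (the solution map φ_z : ℂ → C_z is injective). -/
open Complex

/-- If `Y` is complete with flow `φ`, `f·Y` is complete, and `Yf` is a nonzero constant
`c`, then every trajectory of `Y` through a point where `Y ≠ 0` is of type `ℂ`: the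
solution map `t ↦ φ t z` is injective. -/
theorem trajectories_type_C_of_nonzero_constant_Yf
    (Y : ℂ × ℂ → ℂ × ℂ) (f : ℂ × ℂ → ℂ)
    (hY : Differentiable ℂ Y) (hf : Differentiable ℂ f)
    (φ : ℂ → ℂ × ℂ → ℂ × ℂ)
    (hφ0 : ∀ z, φ 0 z = z)
    (hφgroup : ∀ s t z, φ (s + t) z = φ s (φ t z))
    (hφode : ∀ t z, HasDerivAt (fun s => φ s z) (Y (φ t z)) t)
    (hfYcomplete : ∀ z : ℂ × ℂ, ∃ ψ : ℂ → ℂ × ℂ, ψ 0 = z ∧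
      ∀ t, HasDerivAt ψ (f (ψ t) • Y (ψ t)) t)
    (c : ℂ) (hc : c ≠ 0)
    (hYf : ∀ w : ℂ × ℂ, fderiv ℂ f w (Y w) = c) :
    ∀ z : ℂ × ℂ, Y z ≠ 0 → Function.Injective (fun t : ℂ => φ t z) := by
  intro z _ a b hab
  -- g t = f (φ t z) has derivative c everywhere
  have hg : ∀ t : ℂ, HasDerivAt (fun s => f (φ s z)) c t := by
    intro t
    have h1 : HasFDerivAt f (fderiv ℂ f (φ t z)) (φ t z) :=
      (hf (φ t z)).hasFDerivAt
    have := h1.comp_hasDerivAt t (hφode t z)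
    rw [hYf (φ t z)] at this
    exact this
  -- hence t ↦ f (φ t z) - c * t is constant
  have hconst : ∀ s t : ℂ, f (φ s z) - c * s = f (φ t z) - c * t := by
    have hz : ∀ t : ℂ, HasDerivAt (fun s => f (φ s z) - c * s) 0 t := by
      intro t
      have h3 := (hg t).sub ((hasDerivAt_id t).const_mul c)
      simp at h3
      exact h3
    intro s t
    have := is_const_of_fderiv_eq_zero (𝕜 := ℂ)
      (f := fun s => f (φ s z) - c * s)
      (fun u => ((hz u).differentiableAt))
      (fun u => by
        have := (hz u).hasFDerivAt.fderiv
        simpa [ContinuousLinearMap.smulRight] using this) s t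
    exact this
  have h := hconst a b
  have hfab : f (φ a z) = f (φ b z) := by
    simpa using congrArg f hab
  have : c * a = c * b := by
    rw [hfab] at h
    have := sub_right_injective h
    exact this
  exact mul_left_cancel₀ hc this
end

section
/- Let X = f·Y be a complete holomorphic vector field on ℂ² where f is holomorphic and Y is holomorphic. If the zero set {f = 0} is nonempty and not invariant under the flow of Y (i.e. some trajectory of Y meets {f = 0} at an isolated point without being contained in it), then every nonconstant trajectory of X through a point near such an intersection omits a value, and X is of type ℂ*: its generic trajectories are isomorphic to ℂ*, not ℂ. -/
open Complex

section AuxiliaryLemmas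

open Metric Set Filter MeasureTheory intervalIntegral
open scoped Topology Interval


/-- Local Lipschitz bound for an entire map on `ℂ × ℂ`. -/
lemma lip_of_entire (v : ℂ × ℂ → ℂ × ℂ) (hv : Differentiable ℂ v) (p : ℂ × ℂ) :
    ∃ K : NNReal, LipschitzOnWith K v (closedBall p 1) := by
  obtain ⟨M, hM⟩ := (isCompact_closedBall p 2).exists_bound_of_continuousOn
    hv.continuous.continuousOn
  have hM0 : 0 ≤ M := le_trans (norm_nonneg _) (hM p (mem_closedBall_self (by norm_num)))
  have hfd : ∀ x ∈ closedBall p 1, ‖fderiv ℂ v x‖ ≤ M := by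
    intro x hx
    apply ContinuousLinearMap.opNorm_le_bound _ hM0
    intro h
    rcases eq_or_ne h 0 with rfl | hh
    · simp
    have hhn : (0:ℝ) < ‖h‖ := norm_pos_iff.mpr hh
    have hR : (0:ℝ) < ‖h‖⁻¹ := by positivity
    set cγ : ℂ → ℂ × ℂ := fun z => v (x + z • h) with hcγ
    have hdiff : Differentiable ℂ cγ :=
      hv.comp ((differentiable_id.smul_const h).const_add x)
    have hinner : HasDerivAt (fun z : ℂ => x + z • h) h 0 := by
      simpa using ((hasDerivAt_id (0:ℂ)).smul_const h).const_add x
    have hder : HasDerivAt cγ (fderiv ℂ v x h) 0 := by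
      have hfd' : HasFDerivAt v (fderiv ℂ v x) (x + (0:ℂ) • h) := by
        simpa using (hv x).hasFDerivAt
      exact hfd'.comp_hasDerivAt 0 hinner
    have hb : ∀ z ∈ sphere (0:ℂ) ‖h‖⁻¹, ‖cγ z‖ ≤ M := by
      intro z hz
      apply hM
      rw [mem_closedBall]
      have hz' : ‖z‖ = ‖h‖⁻¹ := mem_sphere_zero_iff_norm.mp hz
      have h1 : dist (x + z • h) x = 1 := by
        rw [dist_eq_norm]
        simp only [add_sub_cancel_left, norm_smul, hz']
        field_simp
      calc dist (x + z • h) p ≤ dist (x + z • h) x + dist x p := dist_triangle _ _ _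
        _ ≤ 1 + 1 := by
            rw [h1]
            exact add_le_add le_rfl (mem_closedBall.mp hx)
        _ = 2 := by norm_num
    have hbound := Complex.norm_deriv_le_of_forall_mem_sphere_norm_le hR
      hdiff.diffContOnCl hb
    rw [hder.deriv] at hbound
    calc ‖fderiv ℂ v x h‖ ≤ M / ‖h‖⁻¹ := hbound
      _ = M * ‖h‖ := by field_simp
  refine ⟨M.toNNReal, lipschitzOnWith_iff_dist_le_mul.mpr ?_⟩
  intro x hx y hy
  rw [dist_eq_norm, dist_eq_norm]
  calc ‖v x - v y‖ ≤ M * ‖x - y‖ :=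
        (convex_closedBall p 1).norm_image_sub_le_of_norm_fderiv_le
          (fun z _ => hv z) hfd hy hx
    _ = M.toNNReal * ‖x - y‖ := by rw [Real.coe_toNNReal M hM0]



/-- Local (real-time) uniqueness for the ODE `c' = a t • vf (c t)`. -/
lemma ode_uniq (vf : ℂ × ℂ → ℂ × ℂ) (hvf : Differentiable ℂ vf) (a : ℝ → ℂ)
    (ha : Continuous a) (c₁ c₂ : ℝ → ℂ × ℂ)
    (h₁ : ∀ r, HasDerivAt c₁ (a r • vf (c₁ r)) r)
    (h₂ : ∀ r, HasDerivAt c₂ (a r • vf (c₂ r)) r)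
    (h0 : c₁ 0 = c₂ 0) : c₁ =ᶠ[𝓝 (0:ℝ)] c₂ := by
  obtain ⟨K, hK⟩ := lip_of_entire vf hvf (c₁ 0)
  set M : ℝ := ‖a 0‖ + 1 with hMdef
  have hM0 : 0 ≤ M := by positivity
  set K' : NNReal := M.toNNReal * K with hK'def
  set sset : ℝ → Set (ℂ × ℂ) := fun t => if ‖a t‖ ≤ M then closedBall (c₁ 0) 1 else ∅
    with hsset
  set v : ℝ → ℂ × ℂ → ℂ × ℂ := fun t x => a t • vf x with hv
  have hlip : ∀ t, LipschitzOnWith K' (v t) (sset t) := by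
    intro t
    by_cases h : ‖a t‖ ≤ M
    · rw [hsset]
      simp only [if_pos h]
      apply lipschitzOnWith_iff_dist_le_mul.mpr
      intro x hx y hy
      have hKd := lipschitzOnWith_iff_dist_le_mul.mp hK x hx y hy
      calc dist (v t x) (v t y) = ‖a t‖ * dist (vf x) (vf y) := dist_smul₀ _ _ _
        _ ≤ M * (K * dist x y) := by
            apply mul_le_mul h hKd (by positivity) hM0
        _ = (K' : ℝ) * dist x y := by
            rw [hK'def]
            push_cast [Real.coe_toNNReal M hM0]
            ring
    · rw [hsset]
      simp only [if_neg h]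
      exact lipschitzOnWith_empty _ _
  have ev_a : ∀ᶠ t in 𝓝 (0:ℝ), ‖a t‖ < M :=
    (ha.norm.continuousAt).eventually_lt_const (by rw [hMdef]; linarith)
  have hc₁ : Continuous c₁ :=
    Differentiable.continuous (fun r => (h₁ r).differentiableAt)
  have hc₂ : Continuous c₂ :=
    Differentiable.continuous (fun r => (h₂ r).differentiableAt)
  have ev₁ : ∀ᶠ t in 𝓝 (0:ℝ), c₁ t ∈ closedBall (c₁ 0) 1 :=
    hc₁.continuousAt.preimage_mem_nhds (closedBall_mem_nhds (c₁ 0) one_pos)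
  have ev₂ : ∀ᶠ t in 𝓝 (0:ℝ), c₂ t ∈ closedBall (c₁ 0) 1 := by
    have := hc₂.continuousAt.preimage_mem_nhds (closedBall_mem_nhds (c₂ 0) one_pos)
    rw [← h0] at this
    exact this
  have hf : ∀ᶠ t in 𝓝 (0:ℝ), HasDerivAt c₁ (v t (c₁ t)) t ∧ c₁ t ∈ sset t := by
    filter_upwards [ev_a, ev₁] with t hta htb
    refine ⟨h₁ t, ?_⟩
    rw [hsset]
    simp only [if_pos hta.le]
    exact htb
  have hg : ∀ᶠ t in 𝓝 (0:ℝ), HasDerivAt c₂ (v t (c₂ t)) t ∧ c₂ t ∈ sset t := by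
    filter_upwards [ev_a, ev₂] with t hta htb
    refine ⟨h₂ t, ?_⟩
    rw [hsset]
    simp only [if_pos hta.le]
    exact htb
  exact ODE_solution_unique_of_eventually (Filter.Eventually.of_forall hlip) hf hg h0

/-- Two entire functions agreeing on a real neighbourhood of `0` agree everywhere. -/
lemma entire_ext {E : Type*} [NormedAddCommGroup E] [NormedSpace ℂ E] [CompleteSpace E]
    {u v : ℂ → E} (hu : Differentiable ℂ u) (hv : Differentiable ℂ v)
    (h : ∀ᶠ r : ℝ in 𝓝 (0:ℝ), u ↑r = v ↑r) : ∀ z, u z = v z := by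
  obtain ⟨δ, hδ, hh⟩ := Metric.eventually_nhds_iff.mp h
  have freq : ∃ᶠ z in 𝓝[≠] (0:ℂ), u z = v z := by
    rw [Filter.frequently_iff]
    intro U hU
    obtain ⟨ε, hε, hsub⟩ := Metric.mem_nhdsWithin_iff.mp hU
    set m : ℝ := min ε δ / 2 with hm
    have hm0 : 0 < m := by positivity
    have hmε : m < ε := by
      have := min_le_left ε δ
      rw [hm]; linarith
    have hmδ : m < δ := by
      have := min_le_right ε δ
      rw [hm]; linarith
    refine ⟨(m : ℂ), hsub ⟨?_, ?_⟩, ?_⟩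
    · rw [mem_ball, dist_eq_norm, sub_zero, Complex.norm_real, Real.norm_eq_abs,
        abs_of_pos hm0]
      exact hmε
    · exact fun hmem => (Complex.ofReal_ne_zero.mpr hm0.ne') (by simpa using hmem)
    · apply hh
      simp [Real.dist_eq, abs_of_pos hm0, hmδ]
  have := AnalyticOnNhd.eqOn_of_preconnected_of_frequently_eq
    (fun z _ => hu.analyticAt z) (fun z _ => hv.analyticAt z)
    isPreconnected_univ (Set.mem_univ (0:ℂ)) freq
  exact fun z => this (Set.mem_univ z)


set_option maxHeartbeats 1000000 in
/-- Every entire function has an entire primitive with prescribed value at `0`. -/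
lemma exists_primitive (F : ℂ → ℂ) (hF : Differentiable ℂ F) (c : ℂ) :
    ∃ τ : ℂ → ℂ, τ 0 = c ∧ ∀ s, HasDerivAt τ (F s) s := by
  have hFa : AnalyticOnNhd ℂ F Set.univ := fun z _ => hF.analyticAt z
  have hF' : Differentiable ℂ (deriv F) := fun z =>
    ((hFa.deriv z (Set.mem_univ z)).differentiableAt : DifferentiableAt ℂ (deriv F) z)
  set g : ℂ → ℂ := fun s => ∫ t in (0:ℝ)..1, F (↑t * s) with hg
  refine ⟨fun s => c + s * g s, by simp, ?_⟩
  intro s₀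
  have hcF : Continuous fun t : ℝ => F (↑t * s₀) :=
    hF.continuous.comp (Complex.continuous_ofReal.mul continuous_const)
  have hcF' : Continuous fun t : ℝ => deriv F (↑t * s₀) * ↑t :=
    ((hF'.continuous.comp (Complex.continuous_ofReal.mul continuous_const)).mul
      Complex.continuous_ofReal)
  obtain ⟨M, hM⟩ := (isCompact_closedBall (0:ℂ) (‖s₀‖ + 1)).exists_bound_of_continuousOn
    (hF'.continuous.continuousOn)
  have meas : ∀ᶠ x in 𝓝 s₀, AEStronglyMeasurable (fun t : ℝ => F (↑t * x))
      (MeasureTheory.volume.restrict (Ι (0:ℝ) 1)) :=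
    Filter.Eventually.of_forall fun x =>
      ((hF.continuous.comp (Complex.continuous_ofReal.mul continuous_const)).aestronglyMeasurable)
  have int : IntervalIntegrable (fun t : ℝ => F (↑t * s₀)) MeasureTheory.volume 0 1 :=
    hcF.intervalIntegrable 0 1
  have meas' : AEStronglyMeasurable (fun t : ℝ => deriv F (↑t * s₀) * ↑t)
      (MeasureTheory.volume.restrict (Ι (0:ℝ) 1)) := hcF'.aestronglyMeasurable
  have bnd : ∀ᵐ t ∂(MeasureTheory.volume), t ∈ Ι (0:ℝ) 1 →
      ∀ x ∈ Metric.ball s₀ 1, ‖deriv F (↑t * x) * ↑t‖ ≤ M := by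
    apply MeasureTheory.ae_of_all
    intro t ht x hx
    rw [Set.uIoc_of_le (zero_le_one)] at ht
    have ht0 : 0 < t := ht.1
    have ht1 : t ≤ 1 := ht.2
    have hxb : ‖x‖ ≤ ‖s₀‖ + 1 := by
      calc ‖x‖ = ‖s₀ + (x - s₀)‖ := by ring_nf
        _ ≤ ‖s₀‖ + ‖x - s₀‖ := norm_add_le _ _
        _ ≤ ‖s₀‖ + 1 := by
            have : dist x s₀ < 1 := mem_ball.mp hx
            rw [dist_eq_norm] at this
            linarith
    have hmem : (↑t * x : ℂ) ∈ closedBall (0:ℂ) (‖s₀‖ + 1) := by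
      rw [mem_closedBall, dist_zero_right, norm_mul, Complex.norm_real, Real.norm_eq_abs,
        abs_of_pos ht0]
      calc t * ‖x‖ ≤ 1 * ‖x‖ := by nlinarith [norm_nonneg x]
        _ = ‖x‖ := one_mul _
        _ ≤ ‖s₀‖ + 1 := hxb
    calc ‖deriv F (↑t * x) * ↑t‖ = ‖deriv F (↑t * x)‖ * ‖(↑t:ℂ)‖ := norm_mul _ _
      _ ≤ M * 1 := by
          apply mul_le_mul (hM _ hmem) ?_ (norm_nonneg _)
            (le_trans (norm_nonneg _) (hM _ hmem))
          rw [Complex.norm_real, Real.norm_eq_abs, abs_of_pos ht0]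
          exact ht1
      _ = M := mul_one _
  have bint : IntervalIntegrable (fun _ : ℝ => M) MeasureTheory.volume 0 1 :=
    intervalIntegrable_const
  have hdiff : ∀ᵐ t ∂(MeasureTheory.volume), t ∈ Ι (0:ℝ) 1 →
      ∀ x ∈ Metric.ball s₀ 1, HasDerivAt (fun x : ℂ => F (↑t * x)) (deriv F (↑t * x) * ↑t) x := by
    apply MeasureTheory.ae_of_all
    intro t _ x _
    have hin : HasDerivAt (fun y : ℂ => (↑t:ℂ) * y) (↑t:ℂ) x := by
      simpa using (hasDerivAt_id x).const_mul (↑t:ℂ)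
    exact ((hF (↑t * x)).hasDerivAt.comp x hin)
  obtain ⟨-, hg'⟩ := intervalIntegral.hasDerivAt_integral_of_dominated_loc_of_deriv_le
    (Metric.ball_mem_nhds s₀ one_pos) meas int meas' bnd bint hdiff
  -- hg' : HasDerivAt g (∫ t in 0..1, deriv F (↑t * s₀) * ↑t) s₀
  have hu : ∀ t ∈ Set.uIcc (0:ℝ) 1,
      HasDerivAt (fun t : ℝ => (↑t:ℂ) * F (↑t * s₀))
        (F (↑t * s₀) + ↑t * (deriv F (↑t * s₀) * s₀)) t := by
    intro t _
    have h1 : HasDerivAt (fun t : ℝ => ((t:ℝ):ℂ)) 1 t := by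
      simpa using (hasDerivAt_id t).ofReal_comp
    have h2 : HasDerivAt (fun t : ℝ => F (↑t * s₀)) (deriv F (↑t * s₀) * s₀) t := by
      have hz : HasDerivAt (fun z : ℂ => F (z * s₀)) (deriv F (↑t * s₀) * s₀) (↑t:ℂ) := by
        exact
          ((hF (↑t * s₀)).hasDerivAt.comp (↑t:ℂ) (hasDerivAt_mul_const s₀))
      exact hz.comp_ofReal
    have h3 := h1.mul h2
    simp only [one_mul] at h3
    exact h3
  have hcont2 : Continuous fun t : ℝ => F (↑t * s₀) + ↑t * (deriv F (↑t * s₀) * s₀) :=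
    hcF.add (Complex.continuous_ofReal.mul ((hF'.continuous.comp
      (Complex.continuous_ofReal.mul continuous_const)).mul continuous_const))
  have ftc := intervalIntegral.integral_eq_sub_of_hasDerivAt hu (hcont2.intervalIntegrable 0 1)
  have ftc' : (∫ t in (0:ℝ)..1, (F (↑t * s₀) + ↑t * (deriv F (↑t * s₀) * s₀))) = F s₀ := by
    rw [ftc]; norm_num
  have hsplit : (∫ t in (0:ℝ)..1, (F (↑t * s₀) + ↑t * (deriv F (↑t * s₀) * s₀)))
      = g s₀ + (∫ t in (0:ℝ)..1, deriv F (↑t * s₀) * ↑t) * s₀ := by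
    have contB : Continuous (fun t : ℝ => (↑t:ℂ) * (deriv F (↑t * s₀) * s₀)) :=
      Complex.continuous_ofReal.mul ((hF'.continuous.comp
        (Complex.continuous_ofReal.mul continuous_const)).mul continuous_const)
    rw [intervalIntegral.integral_add int (contB.intervalIntegrable 0 1)]
    congr 1
    rw [← intervalIntegral.integral_mul_const]
    congr 1
    ext t
    ring
  have key : F s₀ = g s₀ + s₀ * (∫ t in (0:ℝ)..1, deriv F (↑t * s₀) * ↑t) := by
    rw [← ftc', hsplit]; ring
  have final : HasDerivAt (fun s : ℂ => c + s * g s)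
      (1 * g s₀ + s₀ * (∫ t in (0:ℝ)..1, deriv F (↑t * s₀) * ↑t)) s₀ :=
    ((hasDerivAt_id s₀).mul hg').const_add c
  rw [one_mul] at final
  rw [key]
  exact final

end AuxiliaryLemmas

open Metric Set Filter MeasureTheory intervalIntegral in
open scoped Topology Interval in



set_option maxHeartbeats 1000000 in
/-- Let `X = f·Y` be complete on `ℂ²` (with flow `ψ`) where `Y` is complete with flow
`φ`.  Suppose `{f = 0}` is nonempty and not invariant by `Y`: there is `z₀` with
`f z₀ = 0` whose `Y`-trajectory is not contained in `{f = 0}` and meets it only at an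
isolated time.  Then every nonconstant `X`-trajectory through a nearby point
`w = φ t₀ z₀` of that `Y`-trajectory (with `f w ≠ 0`) omits the value `z₀`, and is of
type `ℂ*`: the solution of `X` through `w` is periodic with some nonzero period. -/
theorem type_Cstar_of_noninvariant_zero_set
    (Y : ℂ × ℂ → ℂ × ℂ) (f : ℂ × ℂ → ℂ)
    (hY : Differentiable ℂ Y) (hf : Differentiable ℂ f)
    (φ ψ : ℂ → ℂ × ℂ → ℂ × ℂ)
    (hφ0 : ∀ z, φ 0 z = z)
    (hφode : ∀ t z, HasDerivAt (fun s => φ s z) (Y (φ t z)) t)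
    (hψ0 : ∀ z, ψ 0 z = z)
    (hψgroup : ∀ s t z, ψ (s + t) z = ψ s (ψ t z))
    (hψode : ∀ t z, HasDerivAt (fun s => ψ s z) (f (ψ t z) • Y (ψ t z)) t)
    (z₀ : ℂ × ℂ) (hz₀ : f z₀ = 0) (hYz₀ : Y z₀ ≠ 0)
    (hisolated : ∀ᶠ t in nhdsWithin (0 : ℂ) {0}ᶜ, f (φ t z₀) ≠ 0) :
    ∀ t₀ : ℂ, f (φ t₀ z₀) ≠ 0 →
      (∀ s : ℂ, ψ s (φ t₀ z₀) ≠ z₀) ∧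
      ∃ T : ℂ, T ≠ 0 ∧ ∀ s : ℂ, ψ (s + T) (φ t₀ z₀) = ψ s (φ t₀ z₀) := by
  intro t₀ ht₀
  set w : ℂ × ℂ := φ t₀ z₀ with hw
  set X : ℂ × ℂ → ℂ × ℂ := fun x => f x • Y x with hX
  have DX : Differentiable ℂ X := hf.smul hY
  have Dψ : ∀ z, Differentiable ℂ (fun s => ψ s z) := fun z s => (hψode s z).differentiableAt
  -- Step A: points of {f = 0} are fixed by the flow ψ
  have fix : ∀ p, f p = 0 → ∀ t, ψ t p = p := by
    intro p hp
    have h₁ : ∀ r : ℝ, HasDerivAt (fun r : ℝ => ψ ↑r p) ((1:ℂ) • X (ψ ↑r p)) r := by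
      intro r
      have := HasDerivAt.scomp r (hψode ↑r p) ((hasDerivAt_id r).ofReal_comp)
      simpa [hX, Function.comp_def] using this
    have h₂ : ∀ r : ℝ, HasDerivAt (fun _ : ℝ => p) ((1:ℂ) • X p) r := by
      intro r
      have hz : (1:ℂ) • X p = 0 := by rw [hX]; simp [hp]
      rw [hz]
      exact hasDerivAt_const r p
    have heq := ode_uniq X DX (fun _ => 1) continuous_const _ _ h₁ h₂ (by simp [hψ0])
    exact entire_ext (Dψ p) (differentiable_const p) (heq.mono fun r hr => by simpa using hr)
  -- f never vanishes along the ψ-trajectory of w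
  have noz : ∀ s, f (ψ s w) ≠ 0 := by
    intro s hs
    have hfix := fix _ hs
    have hww : w = ψ s w := by
      have h1 : ψ (-s + s) w = ψ (-s) (ψ s w) := hψgroup _ _ _
      rw [neg_add_cancel, hψ0, hfix (-s)] at h1
      exact h1
    apply ht₀
    rw [hww]
    exact hs
  have part1 : ∀ s, ψ s w ≠ z₀ := fun s h => noz s (by rw [h, hz₀])
  -- the primitive τ of s ↦ f (ψ s w)
  set F : ℂ → ℂ := fun s => f (ψ s w) with hF
  have DF : Differentiable ℂ F := hf.comp (Dψ w)
  obtain ⟨τ, hτ0, hτ⟩ := exists_primitive F DF t₀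
  have Dτ : Differentiable ℂ τ := fun s => (hτ s).differentiableAt
  have Dφz : Differentiable ℂ (fun t => φ t z₀) := fun t => (hφode t z₀).differentiableAt
  -- conjugation:  ψ s w = φ (τ s) z₀
  have EQ : ∀ s, ψ s w = φ (τ s) z₀ := by
    apply entire_ext (Dψ w) (Dφz.comp Dτ)
    have h₁ : ∀ r : ℝ, HasDerivAt (fun r : ℝ => ψ ↑r w) (F ↑r • Y (ψ ↑r w)) r := by
      intro r
      have := HasDerivAt.scomp r (hψode ↑r w) ((hasDerivAt_id r).ofReal_comp)
      simpa [hF, Function.comp_def] using this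
    have h₂ : ∀ r : ℝ, HasDerivAt (fun r : ℝ => φ (τ ↑r) z₀) (F ↑r • Y (φ (τ ↑r) z₀)) r := by
      intro r
      have hτr : HasDerivAt (fun r : ℝ => τ ↑r) (F ↑r) r := (hτ ↑r).comp_ofReal
      exact HasDerivAt.scomp r (hφode (τ ↑r) z₀) hτr
    have := ode_uniq Y hY (fun r => F ↑r) (DF.continuous.comp Complex.continuous_ofReal)
      _ _ h₁ h₂ (by simp [hψ0, hτ0, ← hw])
    exact this.mono fun r hr => hr
  -- τ avoids 0
  have τnz : ∀ s, τ s ≠ 0 := by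
    intro s h
    apply noz s
    have h1 : f (ψ s w) = f (φ (τ s) z₀) := by rw [EQ s]
    rw [h1, h, hφ0]
    exact hz₀
  have hF0 : F 0 ≠ 0 := by
    have h1 : F 0 = f w := by rw [hF]; simp [hψ0]
    rw [h1]
    exact ht₀
  -- τ is not injective
  have hni : ¬ Function.Injective τ := by
    intro hinj
    have hstrict : HasStrictDerivAt τ (F 0) 0 := by
      have h1 : ContDiffAt ℂ 1 τ 0 := (Dτ.analyticAt 0).contDiffAt
      have h2 := h1.hasStrictDerivAt one_ne_zero
      rwa [(hτ 0).deriv] at h2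
    have hmap := hstrict.map_nhds_eq hF0
    have himg : τ '' Metric.ball 0 1 ∈ 𝓝 t₀ := by
      rw [← hτ0, ← hmap]
      exact Filter.image_mem_map (Metric.ball_mem_nhds 0 one_pos)
    obtain ⟨δ, hδ, hball⟩ := Metric.mem_nhds_iff.mp himg
    have hout : ∀ s : ℂ, 1 ≤ ‖s‖ → δ ≤ ‖τ s - t₀‖ := by
      intro s hs
      by_contra hlt
      push_neg at hlt
      have hmem : τ s ∈ Metric.ball t₀ δ := by rwa [Metric.mem_ball, dist_eq_norm]
      obtain ⟨s', hs', hss⟩ := hball hmem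
      have hse : s' = s := hinj hss
      rw [hse] at hs'
      have := mem_ball_zero_iff.mp hs'
      linarith
    set D : ℂ → ℂ := dslope τ 0 with hD
    have hDdiff : Differentiable ℂ D := by
      intro z
      rcases eq_or_ne z 0 with rfl | hz
      · obtain ⟨pp, hpp⟩ := Dτ.analyticAt 0
        exact (hpp.has_fpower_series_dslope_fslope).analyticAt.differentiableAt
      · exact (differentiableAt_dslope_of_ne hz).mpr (Dτ z)
    have hD0 : D 0 = F 0 := by rw [hD, dslope_same, (hτ 0).deriv]
    have hDnz : ∀ z, D z ≠ 0 := by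
      intro z
      rcases eq_or_ne z 0 with rfl | hz
      · rw [hD0]; exact hF0
      · rw [hD, dslope_of_ne τ hz, slope_def_field]
        apply div_ne_zero
        · exact sub_ne_zero.mpr fun h => hz (hinj h)
        · rw [sub_zero]; exact hz
    set G : ℂ → ℂ := fun z => (D z)⁻¹ with hG
    have hGdiff : Differentiable ℂ G := fun z => (hDdiff z).inv (hDnz z)
    have hGnz : ∀ z, G z ≠ 0 := fun z => inv_ne_zero (hDnz z)
    have hGbound : ∀ s : ℂ, 1 ≤ ‖s‖ → ‖G s‖ ≤ ‖s‖ / δ := by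
      intro s hs
      have hs0 : s ≠ 0 := by
        intro h; rw [h] at hs; simp at hs; linarith
      have hτs : δ ≤ ‖τ s - t₀‖ := hout s hs
      have hDval : D s = (τ s - t₀) / s := by
        rw [hD, dslope_of_ne τ hs0, slope_def_field, hτ0, sub_zero]
      have hval : ‖G s‖ = ‖s‖ / ‖τ s - t₀‖ := by
        simp only [hG]
        rw [norm_inv, hDval, norm_div, inv_div]
      rw [hval]
      gcongr
    set Kf : ℂ → ℂ := dslope G 0 with hK
    have hKdiff : Differentiable ℂ Kf := by
      intro z
      rcases eq_or_ne z 0 with rfl | hz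
      · obtain ⟨pp, hpp⟩ := hGdiff.analyticAt 0
        exact (hpp.has_fpower_series_dslope_fslope).analyticAt.differentiableAt
      · exact (differentiableAt_dslope_of_ne hz).mpr (hGdiff z)
    have hbnd : ∃ C : ℝ, ∀ z, ‖Kf z‖ ≤ C := by
      obtain ⟨C₁, hC₁⟩ := (isCompact_closedBall (0:ℂ) 1).exists_bound_of_continuousOn
        hKdiff.continuous.continuousOn
      refine ⟨max C₁ (1/δ + ‖G 0‖), fun z => ?_⟩
      rcases le_or_gt ‖z‖ 1 with h | h
      · exact le_max_of_le_left (hC₁ z (by rwa [mem_closedBall, dist_zero_right]))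
      · apply le_max_of_le_right
        have hz0 : z ≠ 0 := by
          intro e; rw [e] at h; simp at h; linarith
        have hzpos : (0:ℝ) < ‖z‖ := by linarith
        have hKval : Kf z = (G z - G 0) / z := by
          rw [hK, dslope_of_ne G hz0, slope_def_field, sub_zero]
        rw [hKval, norm_div, div_le_iff₀ hzpos]
        have h1 : ‖G z - G 0‖ ≤ ‖z‖/δ + ‖G 0‖ :=
          le_trans (norm_sub_le _ _) (add_le_add (hGbound z h.le) le_rfl)
        have h2 : ‖G 0‖ ≤ ‖G 0‖ * ‖z‖ := by
          nlinarith [norm_nonneg (G 0)]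
        have h3 : (1/δ + ‖G 0‖) * ‖z‖ = ‖z‖/δ + ‖G 0‖ * ‖z‖ := by ring
        linarith
    obtain ⟨C, hC⟩ := hbnd
    have hKconst : ∀ z, Kf z = Kf 0 := fun z =>
      hKdiff.apply_eq_apply_of_bounded
        (isBounded_iff_forall_norm_le.mpr ⟨C, by rintro x ⟨z, rfl⟩; exact hC z⟩) z 0
    have hGaff : ∀ z, G z = G 0 + z * Kf 0 := by
      intro z
      have h1 := sub_smul_dslope G 0 z
      rw [sub_zero, smul_eq_mul, ← hK, hKconst z] at h1
      exact sub_eq_iff_eq_add'.mp h1.symm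
    have hκ0 : Kf 0 = 0 := by
      by_contra hκ
      exact hGnz (-G 0 / Kf 0) (by rw [hGaff]; field_simp; ring)
    have hDconst : ∀ z, D z = F 0 := by
      intro z
      have h1 : G z = G 0 := by rw [hGaff, hκ0, mul_zero, add_zero]
      simp only [hG] at h1
      have h2 := inv_inj.mp h1
      rwa [hD0] at h2
    have hτaff : ∀ z, τ z = t₀ + z * F 0 := by
      intro z
      have h1 := sub_smul_dslope τ 0 z
      rw [sub_zero, smul_eq_mul, ← hD, hDconst z, hτ0] at h1
      exact sub_eq_iff_eq_add'.mp h1.symm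
    exact τnz (-t₀ / F 0) (by rw [hτaff]; field_simp; ring)
  -- produce the period
  obtain ⟨A, B, hAB, hne⟩ := Function.not_injective_iff.mp hni
  have hψAB : ψ A w = ψ B w := by rw [EQ A, EQ B, hAB]
  have hT : ψ (-B + A) w = w := by
    have h1 : ψ (-B + A) w = ψ (-B) (ψ A w) := hψgroup _ _ _
    rw [hψAB, ← hψgroup, neg_add_cancel, hψ0] at h1
    exact h1
  refine ⟨part1, -B + A, ?_, ?_⟩
  · intro h
    exact hne (neg_add_eq_zero.mp h).symm
  · intro s
    rw [hψgroup s (-B + A) w, hT]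
end
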